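/- arXiv:2602.00906 — 4 statements merged into one kernel-verified Lean document; each statement's English description precedes it below -/
import Mathlib

section
/- The map (p, μK, μN) ↦ F_p(μK, μN) is jointly lower semicontinuous on [0,1) × P([0,1]) × P([0,1]), where P([0,1]) carries the weak-* topology: for any sequence (p_j, μ_{K,j}, μ_{N,j}) → (p, μK, μN) with p_j, p ∈ [0,1), one has liminf_{j→∞} F_{p_j}(μ_{K,j}, μ_{N,j}) ≥ F_p(μK, μN). -/
/- STATEMENT 1: Joint lower semicontinuity of (p, μK, μN) ↦ F_p(μK, μN)
   on [0,1) × P([0,1]) × P([0,1]) with the weak-* topology, in sequential form. -/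

open MeasureTheory Filter Topology

abbrev I01 : Set ℝ := Set.Icc 0 1

open Classical in
/-- Kullback–Leibler divergence with logarithm base 2, valued in `EReal`. -/
noncomputable def klDiv2 {α : Type*} [MeasurableSpace α] (μ ν : Measure α) : EReal :=
  if μ ≪ ν ∧ Integrable (fun x => Real.logb 2 ((μ.rnDeriv ν x).toReal)) μ
  then ((∫ x, Real.logb 2 ((μ.rnDeriv ν x).toReal) ∂μ : ℝ) : EReal)
  else ⊤

noncomputable def mix {α : Type*} [MeasurableSpace α] (p : ℝ) (μ ν : Measure α) : Measure α :=
  (ENNReal.ofReal p) • μ + (ENNReal.ofReal (1 - p)) • ν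

/-- `F_p(μK, μN)`, with `F_0(μK, μN) = KL(μK ‖ μN)`. -/
noncomputable def Fp {α : Type*} [MeasurableSpace α] (p : ℝ) (μK μN : Measure α) : EReal :=
  if p = 0 then klDiv2 μK μN
  else klDiv2 μK (mix p μK μN) + (((1 - p) / p : ℝ) : EReal) * klDiv2 μN (mix p μK μN)

namespace KLAux

noncomputable def e2 (y : ℝ) : ℝ := Real.exp (Real.log 2 * y)

lemma e2_pos (y : ℝ) : 0 < e2 y := Real.exp_pos _

lemma continuous_e2 : Continuous e2 := Real.continuous_exp.comp (continuous_const.mul continuous_id)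

lemma e2_mono : Monotone e2 := fun a b h => Real.exp_le_exp.2 (by
  have h2 : (0:ℝ) < Real.log 2 := Real.log_pos one_lt_two
  nlinarith)

lemma logb_e2 (y : ℝ) : Real.logb 2 (e2 y) = y := by
  have h2 : Real.log 2 ≠ 0 := ne_of_gt (Real.log_pos one_lt_two)
  rw [e2, Real.logb, Real.log_exp]
  field_simp

lemma e2_logb {t : ℝ} (ht : 0 < t) : e2 (Real.logb 2 t) = t := by
  have h2 : Real.log 2 ≠ 0 := ne_of_gt (Real.log_pos one_lt_two)
  rw [e2, Real.logb]
  rw [mul_div_cancel₀ _ h2, Real.exp_log ht]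

lemma e2_min (a b : ℝ) : e2 (min a b) = min (e2 a) (e2 b) := e2_mono.map_min

lemma e2_max (a b : ℝ) : e2 (max a b) = max (e2 a) (e2 b) := e2_mono.map_max

lemma measurable_e2 : Measurable e2 := continuous_e2.measurable

lemma measurable_logb : Measurable (Real.logb 2) := Real.measurable_log.div_const _

/-- exp-type Lipschitz bound below a threshold. -/
lemma e2_sub_le {a b c : ℝ} (ha : a ≤ c) (hb : b ≤ c) : |e2 a - e2 b| ≤ Real.log 2 * e2 c * |a - b| := by
  have h2 : (0:ℝ) < Real.log 2 := Real.log_pos one_lt_two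
  wlog hab : b ≤ a generalizing a b
  · have := this hb ha (le_of_not_ge hab)
    rw [abs_sub_comm, abs_sub_comm b a] at this
    exact this
  have h1 : e2 b ≤ e2 a := e2_mono (by nlinarith [mul_le_mul_of_nonneg_left hab h2.le] : b ≤ a)
  rw [abs_of_nonneg (by linarith), abs_of_nonneg (by linarith)]
  -- e2 a - e2 b = e2 a * (1 - exp(log2 (b - a))) ≤ e2 c * (log2 * (a - b))
  have key : e2 a - e2 b ≤ e2 a * (Real.log 2 * (a - b)) := by
    have h3 : Real.log 2 * b - Real.log 2 * a + 1 ≤ Real.exp (Real.log 2 * b - Real.log 2 * a) :=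
      Real.add_one_le_exp _
    have h4 : e2 b = e2 a * Real.exp (Real.log 2 * b - Real.log 2 * a) := by
      rw [e2, e2, ← Real.exp_add]; ring_nf
    have h5 : e2 a * (Real.log 2 * b - Real.log 2 * a + 1) ≤ e2 b := by
      rw [h4]; exact mul_le_mul_of_nonneg_left h3 (e2_pos a).le
    nlinarith [e2_pos a]
  have h6 : e2 a ≤ e2 c := e2_mono ha
  nlinarith [e2_pos a, e2_pos c]

lemma clamp_abs_le {a b B : ℝ} (h1 : -B ≤ a) (h2 : a ≤ B) :
    |max (min b B) (-B) - a| ≤ |b - a| := by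
  rcases le_total b B with hbB | hbB
  · rcases le_total (-B) b with hBb | hBb
    · rw [min_eq_left hbB, max_eq_left hBb]
    · rw [min_eq_left hbB, max_eq_right hBb]
      rw [abs_le]; constructor <;> [skip; skip] <;>
        · rcases abs_le.1 (le_refl |b - a|) with ⟨h3, h4⟩
          rcases le_or_gt 0 (b - a) with h5 | h5
          · rw [abs_of_nonneg h5]; linarith
          · rw [abs_of_neg h5]; linarith
  · rw [min_eq_right hbB, max_eq_left (by linarith : -B ≤ B)]
    rcases le_or_gt 0 (b - a) with h5 | h5
    · rw [abs_of_nonneg h5, abs_le]; constructor <;> linarith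
    · rw [abs_of_neg h5, abs_le]; constructor <;> linarith

lemma integrable_of_bounded {α : Type*} [MeasurableSpace α] {f : α → ℝ} (μ : Measure α)
    [IsFiniteMeasure μ] (hm : AEStronglyMeasurable f μ) {B : ℝ} (hB : ∀ x, |f x| ≤ B) :
    Integrable f μ :=
  (integrable_const B).mono' hm (Eventually.of_forall fun x => by
    rw [Real.norm_eq_abs]; exact hB x)


noncomputable def DVR (f : I01 → ℝ) (μ ν : Measure I01) : ℝ :=
  ∫ x, f x ∂μ - Real.logb 2 (∫ x, e2 (f x) ∂ν)

lemma lemA (μ ν : Measure I01) [IsProbabilityMeasure μ] [IsProbabilityMeasure ν]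
    {f : I01 → ℝ} (hfm : Measurable f) {B : ℝ} (hB : ∀ x, |f x| ≤ B) :
    (DVR f μ ν : EReal) ≤ klDiv2 μ ν := by
  rw [klDiv2]
  split_ifs with hk
  swap
  · exact le_top
  obtain ⟨hac, hint⟩ := hk
  rw [EReal.coe_le_coe_iff]
  set t : I01 → ℝ := fun x => (μ.rnDeriv ν x).toReal with ht
  have htm : Measurable t := (Measure.measurable_rnDeriv μ ν).ennreal_toReal
  set L : I01 → ℝ := fun x => Real.logb 2 (t x) with hL
  have hLm : Measurable L := measurable_logb.comp htm
  have htpos : ∀ᵐ x ∂μ, 0 < t x := by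
    filter_upwards [Measure.rnDeriv_pos hac,
      (Measure.rnDeriv_ne_top μ ν).filter_mono hac.ae_le] with x h1 h2
    exact ENNReal.toReal_pos h1.ne' h2
  have hfint : Integrable f μ := integrable_of_bounded μ hfm.aestronglyMeasurable hB
  set h : I01 → ℝ := fun x => Real.log 2 * (f x - L x) with hh
  have hhint : Integrable h μ := (hfint.sub hint).const_mul _
  set ψ : I01 → ℝ := fun x => t x * (e2 (f x) * (t x)⁻¹) with hψ
  have hψ_eq : ∀ x, ψ x = if t x = 0 then 0 else e2 (f x) := by
    intro x
    by_cases h0 : t x = 0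
    · simp [hψ, h0]
    · rw [hψ]; simp only [if_neg h0]; field_simp
  have hψm : Measurable ψ := htm.mul ((measurable_e2.comp hfm).mul htm.inv)
  have he2f_bound : ∀ x, |e2 (f x)| ≤ e2 B := fun x => by
    rw [abs_of_nonneg (e2_pos _).le]; exact e2_mono ((abs_le.1 (hB x)).2)
  have hψint : Integrable ψ ν := by
    refine integrable_of_bounded ν hψm.aestronglyMeasurable (B := e2 B) (fun x => ?_)
    rw [hψ_eq]
    split_ifs with h0
    · simpa using (e2_pos B).le
    · exact he2f_bound x
  have hφint : Integrable (fun x => e2 (f x) * (t x)⁻¹) μ :=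
    (MeasureTheory.integrable_rnDeriv_smul_iff hac).1 (by simpa [smul_eq_mul] using hψint)
  have hexp_eq : ∀ᵐ x ∂μ, Real.exp (h x) = e2 (f x) * (t x)⁻¹ := by
    filter_upwards [htpos] with x hx
    rw [hh]
    simp only
    rw [mul_sub, Real.exp_sub, e2]
    congr 1
    rw [hL]
    simp only
    rw [Real.logb, mul_div_cancel₀ _ (ne_of_gt (Real.log_pos one_lt_two)), Real.exp_log hx]
  have hexpint : Integrable (fun x => Real.exp (h x)) μ :=
    hφint.congr (by filter_upwards [hexp_eq] with x hx; exact hx.symm)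
  have jensen : Real.exp (∫ x, h x ∂μ) ≤ ∫ x, Real.exp (h x) ∂μ := by
    have := convexOn_exp.map_integral_le Real.continuous_exp.continuousOn isClosed_univ
      (Eventually.of_forall fun x => Set.mem_univ (h x)) hhint
      (by exact hexpint)
    simpa using this
  have hint_eq : ∫ x, Real.exp (h x) ∂μ = ∫ x, ψ x ∂ν := by
    rw [integral_congr_ae hexp_eq, ← MeasureTheory.integral_rnDeriv_smul hac]
    simp only [hψ, smul_eq_mul]; rfl
  have hE : Integrable (fun x => e2 (f x)) ν :=
    integrable_of_bounded ν (measurable_e2.comp hfm).aestronglyMeasurable he2f_bound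
  have hψ_le : ∫ x, ψ x ∂ν ≤ ∫ x, e2 (f x) ∂ν := by
    refine integral_mono hψint hE (fun x => ?_)
    rw [hψ_eq]
    split_ifs with h0
    · exact (e2_pos _).le
    · exact le_rfl
  have hEpos : 0 < ∫ x, e2 (f x) ∂ν := by
    have h1 : e2 (-B) = ∫ _x, e2 (-B) ∂ν := by simp
    calc (0:ℝ) < e2 (-B) := e2_pos _
      _ = ∫ _x, e2 (-B) ∂ν := h1
      _ ≤ ∫ x, e2 (f x) ∂ν :=
        integral_mono (integrable_const _) hE (fun x => e2_mono ((abs_le.1 (hB x)).1))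
  have hkey : Real.exp (∫ x, h x ∂μ) ≤ ∫ x, e2 (f x) ∂ν :=
    jensen.trans (hint_eq ▸ hψ_le)
  have hlog : ∫ x, h x ∂μ ≤ Real.log (∫ x, e2 (f x) ∂ν) := by
    calc ∫ x, h x ∂μ = Real.log (Real.exp (∫ x, h x ∂μ)) := (Real.log_exp _).symm
      _ ≤ Real.log (∫ x, e2 (f x) ∂ν) := Real.log_le_log (Real.exp_pos _) hkey
  have hinth : ∫ x, h x ∂μ = Real.log 2 * (∫ x, f x ∂μ - ∫ x, L x ∂μ) := by
    rw [hh]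
    rw [MeasureTheory.integral_const_mul, integral_sub hfint hint]
  rw [DVR, Real.logb]
  have h2 : (0:ℝ) < Real.log 2 := Real.log_pos one_lt_two
  rw [hinth] at hlog
  have hdiv : ∫ x, f x ∂μ - ∫ x, L x ∂μ ≤ Real.log (∫ x, e2 (f x) ∂ν) / Real.log 2 :=
    (le_div_iff₀ h2).2 (by linarith)
  linarith

lemma klDiv2_nonneg (μ ν : Measure I01) [IsProbabilityMeasure μ] [IsProbabilityMeasure ν] :
    (0 : EReal) ≤ klDiv2 μ ν := by
  have := lemA μ ν (f := fun _ => 0) measurable_const (B := 0) (fun x => by simp)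
  refine le_trans (le_of_eq ?_) this
  rw [DVR]
  simp [e2, Real.logb]


lemma lemB2 (μ ν : Measure I01) [IsProbabilityMeasure μ] [IsProbabilityMeasure ν]
    {f : I01 → ℝ} (hfm : Measurable f) {B : ℝ} (hB : ∀ x, |f x| ≤ B) {c : ℝ}
    (hc : c < DVR f μ ν) : ∃ g : I01 → ℝ, Continuous g ∧ c < DVR g μ ν := by
  have hB0 : 0 ≤ B := le_trans (abs_nonneg _) (hB ⟨0, by norm_num⟩)
  have hf1 : Integrable f (μ + ν) := integrable_of_bounded _ hfm.aestronglyMeasurable hB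
  have hfμ : Integrable f μ := integrable_of_bounded _ hfm.aestronglyMeasurable hB
  have hfν : Integrable f ν := integrable_of_bounded _ hfm.aestronglyMeasurable hB
  have hgn : ∀ n : ℕ, ∃ g : BoundedContinuousFunction I01 ℝ, (∫ x, ‖f x - g x‖ ∂(μ+ν)) ≤ 1/(n+1) := by
    intro n
    obtain ⟨g, hg, _⟩ := hf1.exists_boundedContinuous_integral_sub_le
      (by positivity : (0:ℝ) < 1/(n+1))
    exact ⟨g, hg⟩
  choose g hg using hgn
  set h : ℕ → I01 → ℝ := fun n x => max (min (g n x) B) (-B) with hhdef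
  have hcont : ∀ n, Continuous (h n) :=
    fun n => ((g n).continuous.min continuous_const).max continuous_const
  have hbd : ∀ n x, |h n x| ≤ B := fun n x =>
    abs_le.2 ⟨le_max_right _ _, max_le (min_le_right _ _) (by linarith)⟩
  have hdist : ∀ n x, |h n x - f x| ≤ |f x - g n x| := by
    intro n x
    rw [abs_sub_comm (f x) (g n x)]
    exact clamp_abs_le (abs_le.1 (hB x)).1 (abs_le.1 (hB x)).2
  have hint_h : ∀ n, Integrable (h n) μ := fun n =>
    integrable_of_bounded _ (hcont n).measurable.aestronglyMeasurable (hbd n)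
  have habs_int : ∀ n, Integrable (fun x => |f x - g n x|) (μ + ν) :=
    fun n => (hf1.sub ((g n).integrable _)).abs
  -- driver: ∫ |f - g n| d(μ+ν) ≤ 1/(n+1), and both marginal integrals are ≤ it
  have hmarg : ∀ n, (∫ x, |f x - g n x| ∂μ) ≤ 1/(n+1) ∧ (∫ x, |f x - g n x| ∂ν) ≤ 1/(n+1) := by
    intro n
    have hsplit : (∫ x, |f x - g n x| ∂(μ+ν))
        = (∫ x, |f x - g n x| ∂μ) + (∫ x, |f x - g n x| ∂ν) :=
      integral_add_measure ((habs_int n).mono_measure (Measure.le_add_right le_rfl))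
        ((habs_int n).mono_measure (Measure.le_add_left le_rfl))
    have h1 : (0:ℝ) ≤ ∫ x, |f x - g n x| ∂μ := integral_nonneg fun x => abs_nonneg _
    have h2 : (0:ℝ) ≤ ∫ x, |f x - g n x| ∂ν := integral_nonneg fun x => abs_nonneg _
    have := hg n
    simp only [Real.norm_eq_abs] at this
    rw [hsplit] at this
    exact ⟨by linarith, by linarith⟩
  -- T1
  have T1 : Tendsto (fun n => ∫ x, h n x ∂μ) atTop (𝓝 (∫ x, f x ∂μ)) := by
    rw [tendsto_iff_dist_tendsto_zero]
    refine squeeze_zero (fun n => dist_nonneg) (fun n => ?_)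
      tendsto_one_div_add_atTop_nhds_zero_nat
    rw [Real.dist_eq, ← integral_sub (hint_h n) hfμ]
    have habs1 : |∫ x, (h n x - f x) ∂μ| ≤ ∫ x, |h n x - f x| ∂μ := by
      simpa [Real.norm_eq_abs] using
        norm_integral_le_integral_norm (μ := μ) (fun x => h n x - f x)
    calc |∫ x, (h n x - f x) ∂μ| ≤ ∫ x, |h n x - f x| ∂μ := habs1
      _ ≤ ∫ x, |f x - g n x| ∂μ := integral_mono ((hint_h n).sub hfμ).abs
          (((habs_int n).mono_measure (Measure.le_add_right le_rfl))) (fun x => hdist n x)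
      _ ≤ 1/(n+1) := (hmarg n).1
  -- T2
  have hEint : ∀ n, Integrable (fun x => e2 (h n x)) ν := fun n =>
    integrable_of_bounded _ (measurable_e2.comp (hcont n).measurable).aestronglyMeasurable
      (B := e2 B) (fun x => by
        rw [abs_of_nonneg (e2_pos _).le]; exact e2_mono ((abs_le.1 (hbd n x)).2))
  have hEfint : Integrable (fun x => e2 (f x)) ν :=
    integrable_of_bounded _ (measurable_e2.comp hfm).aestronglyMeasurable
      (B := e2 B) (fun x => by
        rw [abs_of_nonneg (e2_pos _).le]; exact e2_mono ((abs_le.1 (hB x)).2))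
  have T2 : Tendsto (fun n => ∫ x, e2 (h n x) ∂ν) atTop (𝓝 (∫ x, e2 (f x) ∂ν)) := by
    rw [tendsto_iff_dist_tendsto_zero]
    have hK : (0:ℝ) ≤ Real.log 2 * e2 B := by
      exact mul_nonneg (Real.log_pos (by norm_num)).le (e2_pos _).le
    refine squeeze_zero (fun n => dist_nonneg) (fun n => ?_)
      (by simpa using tendsto_one_div_add_atTop_nhds_zero_nat.const_mul (Real.log 2 * e2 B))
    rw [Real.dist_eq, ← integral_sub (hEint n) hEfint]
    have habs2 : |∫ x, (e2 (h n x) - e2 (f x)) ∂ν| ≤ ∫ x, |e2 (h n x) - e2 (f x)| ∂ν := by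
      simpa [Real.norm_eq_abs] using
        norm_integral_le_integral_norm (μ := ν) (fun x => e2 (h n x) - e2 (f x))
    calc |∫ x, (e2 (h n x) - e2 (f x)) ∂ν| ≤ ∫ x, |e2 (h n x) - e2 (f x)| ∂ν := habs2
      _ ≤ ∫ x, Real.log 2 * e2 B * |f x - g n x| ∂ν := by
          refine integral_mono ((hEint n).sub hEfint).abs
            (((habs_int n).mono_measure (Measure.le_add_left le_rfl)).const_mul _) (fun x => ?_)
          calc |e2 (h n x) - e2 (f x)| ≤ Real.log 2 * e2 B * |h n x - f x| :=
              e2_sub_le (abs_le.1 (hbd n x)).2 (abs_le.1 (hB x)).2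
            _ ≤ Real.log 2 * e2 B * |f x - g n x| :=
              mul_le_mul_of_nonneg_left (hdist n x) hK
      _ = Real.log 2 * e2 B * ∫ x, |f x - g n x| ∂ν := integral_const_mul _ _
      _ ≤ Real.log 2 * e2 B * (1/(n+1)) := mul_le_mul_of_nonneg_left (hmarg n).2 hK
      _ = Real.log 2 * e2 B * ((n:ℝ)+1)⁻¹ := by rw [one_div]
  -- positivity of the limit integral
  have hEpos : 0 < ∫ x, e2 (f x) ∂ν := by
    have h1 : e2 (-B) = ∫ _x, e2 (-B) ∂ν := by simp
    calc (0:ℝ) < e2 (-B) := e2_pos _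
      _ = ∫ _x, e2 (-B) ∂ν := h1
      _ ≤ ∫ x, e2 (f x) ∂ν :=
        integral_mono (integrable_const _) hEfint (fun x => e2_mono ((abs_le.1 (hB x)).1))
  -- conclude
  have Tlog : Tendsto (fun n => Real.logb 2 (∫ x, e2 (h n x) ∂ν)) atTop
      (𝓝 (Real.logb 2 (∫ x, e2 (f x) ∂ν))) := by
    have hcont_log : ContinuousAt (Real.logb 2) (∫ x, e2 (f x) ∂ν) :=
      (Real.continuousAt_log hEpos.ne').div_const _
    exact hcont_log.tendsto.comp T2
  have TD : Tendsto (fun n => DVR (h n) μ ν) atTop (𝓝 (DVR f μ ν)) := T1.sub Tlog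
  obtain ⟨n, hn⟩ := (TD.eventually (eventually_gt_nhds hc)).exists
  exact ⟨h n, hcont n, hn⟩


lemma e2_zero : e2 0 = 1 := by simp [e2]

lemma e2_neg_le_one (n : ℝ) (hn : 0 ≤ n) : e2 (-n) ≤ 1 := by
  rw [← e2_zero]; exact e2_mono (by linarith)

lemma one_le_e2 (n : ℝ) (hn : 0 ≤ n) : 1 ≤ e2 n := by
  rw [← e2_zero]; exact e2_mono hn

lemma lemB (μ ν : Measure I01) [IsProbabilityMeasure μ] [IsProbabilityMeasure ν]
    (c : ℝ) (hc : (c : EReal) < klDiv2 μ ν) :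
    ∃ g : I01 → ℝ, Continuous g ∧ c < DVR g μ ν := by
  by_cases hac : μ ≪ ν
  swap
  · -- singular case
    obtain ⟨s0, hs0ν, hs0μ⟩ : ∃ s, ν s = 0 ∧ μ s ≠ 0 := by
      by_contra hcon
      push_neg at hcon
      exact hac (Measure.AbsolutelyContinuous.mk (fun s _ hs => by
        by_contra hμs
        exact hμs (hcon s hs)))
    set s := toMeasurable ν s0 with hs
    have hsm : MeasurableSet s := measurableSet_toMeasurable ν s0
    have hsν : ν s = 0 := by rw [hs, measure_toMeasurable]; exact hs0ν
    have hsμ : μ s ≠ 0 := fun h =>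
      hs0μ (le_antisymm (h ▸ measure_mono (subset_toMeasurable ν s0)) zero_le)
    have hm : 0 < (μ s).toReal := ENNReal.toReal_pos hsμ (measure_ne_top μ s)
    set a : ℝ := (max c 0 + 1) / (μ s).toReal with ha
    set f : I01 → ℝ := s.indicator (fun _ => a) with hf
    have hfm : Measurable f := measurable_const.indicator hsm
    have hfb : ∀ x, |f x| ≤ |a| := fun x => by
      rw [hf, Set.indicator]
      split_ifs
      · exact le_rfl
      · simp
    have hint1 : ∫ x, f x ∂μ = (μ s).toReal * a := by
      rw [hf, integral_indicator_const a hsm, smul_eq_mul]; rfl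
    have he2f : ∀ x, e2 (f x) = s.indicator (fun _ => e2 a - 1) x + 1 := fun x => by
      rw [hf, Set.indicator, Set.indicator]
      split_ifs
      · ring
      · simp [e2_zero]
    have hint2 : ∫ x, e2 (f x) ∂ν = 1 := by
      rw [integral_congr_ae (Eventually.of_forall he2f), integral_add
        ((integrable_const _).indicator hsm) (integrable_const _),
        integral_indicator_const _ hsm, integral_const]
      simp [hsν, Measure.real]
    have hDVR : c < DVR f μ ν := by
      rw [DVR, hint1, hint2]
      have : Real.logb 2 1 = 0 := by simp
      rw [this, sub_zero, ha, mul_div_cancel₀ _ (ne_of_gt hm)]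
      have := le_max_left c 0
      linarith
    exact lemB2 μ ν hfm hfb hDVR
  · -- absolutely continuous case
    set t : I01 → ℝ := fun x => (μ.rnDeriv ν x).toReal with htdef
    have htm : Measurable t := (Measure.measurable_rnDeriv μ ν).ennreal_toReal
    have ht0 : ∀ x, 0 ≤ t x := fun x => ENNReal.toReal_nonneg
    set L : I01 → ℝ := fun x => Real.logb 2 (t x) with hLdef
    have hLm : Measurable L := measurable_logb.comp htm
    set fn : ℕ → I01 → ℝ :=
      fun n x => min (Real.logb 2 (max (t x) (e2 (-(n:ℝ))))) (n:ℝ) with hfndef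
    have hεpos : ∀ n : ℕ, (0:ℝ) < e2 (-(n:ℝ)) := fun n => e2_pos _
    have hfnm : ∀ n, Measurable (fn n) := fun n =>
      (measurable_logb.comp (htm.max measurable_const)).min measurable_const
    have hfnb : ∀ n, ∀ x, |fn n x| ≤ (n:ℝ) := by
      intro n x
      rw [abs_le]
      constructor
      · rw [hfndef]
        simp only [le_min_iff]
        constructor
        · have h1 : e2 (-(n:ℝ)) ≤ max (t x) (e2 (-(n:ℝ))) := le_max_right _ _
          have h2 := Real.logb_le_logb_of_le (b := 2) one_lt_two (hεpos n) h1
          rwa [logb_e2] at h2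
        · exact neg_le_self (Nat.cast_nonneg n)
      · exact min_le_right _ _
    have he2fn : ∀ n x, e2 (fn n x) = min (max (t x) (e2 (-(n:ℝ)))) (e2 (n:ℝ)) := by
      intro n x
      rw [hfndef]
      simp only
      rw [e2_mono.map_min]
      congr 1
      exact e2_logb (lt_of_lt_of_le (hεpos n) (le_max_right _ _))
    have htint : Integrable t ν := Measure.integrable_toReal_rnDeriv
    have hdomint : Integrable (fun x => max (t x) 1) ν := by
      refine (htint.add (integrable_const 1)).mono'
        ((htm.max measurable_const).aestronglyMeasurable) (Eventually.of_forall fun x => ?_)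
      rw [Real.norm_eq_abs, abs_of_nonneg (le_trans zero_le_one (le_max_right _ _))]
      simp only [Pi.add_apply]
      rcases le_total (t x) 1 with h | h
      · simp only [max_eq_right h]; nlinarith [ht0 x]
      · simp only [max_eq_left h]; nlinarith
    have hfn_e2_bd : ∀ n x, e2 (fn n x) ≤ max (t x) 1 := by
      intro n x
      rw [he2fn]
      calc min (max (t x) (e2 (-(n:ℝ)))) (e2 (n:ℝ)) ≤ max (t x) (e2 (-(n:ℝ))) := min_le_left _ _
        _ ≤ max (t x) 1 := max_le_max le_rfl (e2_neg_le_one _ (Nat.cast_nonneg n))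
    have hεlim : Tendsto (fun n : ℕ => e2 (-(n:ℝ))) atTop (𝓝 0) := by
      have h1 : Tendsto (fun n : ℕ => Real.log 2 * -(n:ℝ)) atTop atBot := by
        apply Tendsto.const_mul_atBot (Real.log_pos one_lt_two)
        exact tendsto_neg_atBot_iff.mpr tendsto_natCast_atTop_atTop
      exact Real.tendsto_exp_atBot.comp h1
    have T2 : Tendsto (fun n => ∫ x, e2 (fn n x) ∂ν) atTop (𝓝 1) := by
      have hti : ∫ x, t x ∂ν = 1 := by
        have := Measure.integral_toReal_rnDeriv hac
        simp only [htdef]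
        rw [this]
        simp
      rw [← hti]
      refine tendsto_integral_of_dominated_convergence (fun x => max (t x) 1)
        (fun n => (measurable_e2.comp (hfnm n)).aestronglyMeasurable) hdomint
        (fun n => Eventually.of_forall fun x => ?_) (Eventually.of_forall fun x => ?_)
      · rw [Real.norm_eq_abs, abs_of_nonneg (e2_pos _).le]
        exact hfn_e2_bd n x
      · -- pointwise convergence
        rcases eq_or_lt_of_le (ht0 x) with h0 | h0
        · -- t x = 0
          have heq : ∀ n : ℕ, e2 (fn n x) = e2 (-(n:ℝ)) := by
            intro n
            rw [he2fn, ← h0, max_eq_right (hεpos n).le,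
              min_eq_left ((e2_neg_le_one _ (Nat.cast_nonneg n)).trans
                (one_le_e2 _ (Nat.cast_nonneg n)))]
          rw [← h0]
          exact (hεlim.congr (fun n => (heq n).symm))
        · -- t x > 0
          have heq : ∀ᶠ n : ℕ in atTop, e2 (fn n x) = t x := by
            filter_upwards [eventually_ge_atTop ⌈|Real.logb 2 (t x)|⌉₊] with n hn
            have hn' : |Real.logb 2 (t x)| ≤ (n:ℝ) := by
              calc |Real.logb 2 (t x)| ≤ (⌈|Real.logb 2 (t x)|⌉₊ : ℝ) := Nat.le_ceil _
                _ ≤ (n:ℝ) := Nat.cast_le.2 hn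
            have h1 : e2 (-(n:ℝ)) ≤ t x := by
              have := e2_mono (le_trans (neg_le_neg hn') (neg_abs_le (Real.logb 2 (t x))))
              rwa [e2_logb h0] at this
            have h2 : t x ≤ e2 (n:ℝ) := by
              have := e2_mono (le_trans (le_abs_self (Real.logb 2 (t x))) hn')
              rwa [e2_logb h0] at this
            rw [he2fn, max_eq_left h1, min_eq_left h2]
          refine Tendsto.congr' ?_ tendsto_const_nhds
          filter_upwards [heq] with n h
          exact h.symm
    have hEpos' : ∀ n, 0 < ∫ x, e2 (fn n x) ∂ν := by
      intro n
      have hint : Integrable (fun x => e2 (fn n x)) ν :=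
        integrable_of_bounded ν ((measurable_e2.comp (hfnm n)).aestronglyMeasurable)
          (B := e2 (n:ℝ)) (fun x => by
            rw [abs_of_nonneg (e2_pos _).le]
            exact e2_mono ((abs_le.1 (hfnb n x)).2))
      calc (0:ℝ) < e2 (-(n:ℝ)) := hεpos n
        _ = ∫ _x, e2 (-(n:ℝ)) ∂ν := by simp
        _ ≤ ∫ x, e2 (fn n x) ∂ν := integral_mono (integrable_const _) hint
            (fun x => e2_mono ((abs_le.1 (hfnb n x)).1))
    have Tlog : Tendsto (fun n => Real.logb 2 (∫ x, e2 (fn n x) ∂ν)) atTop (𝓝 0) := by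
      have hcl : ContinuousAt (Real.logb 2) 1 := (Real.continuousAt_log one_ne_zero).div_const _
      have := hcl.tendsto.comp T2
      simpa [Function.comp_def] using this
    -- a.e. identification of fn with clipped L
    have htpos : ∀ᵐ x ∂μ, 0 < t x := by
      filter_upwards [Measure.rnDeriv_pos hac,
        (Measure.rnDeriv_ne_top μ ν).filter_mono hac.ae_le] with x h1 h2
      exact ENNReal.toReal_pos h1.ne' h2
    have haefn : ∀ᵐ x ∂μ, ∀ n : ℕ, fn n x = max (min (L x) (n:ℝ)) (-(n:ℝ)) := by
      filter_upwards [htpos] with x hx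
      intro n
      rw [hfndef]
      simp only
      rcases le_total (t x) (e2 (-(n:ℝ))) with h | h
      · have hL : L x ≤ -(n:ℝ) := by
          have := Real.logb_le_logb_of_le (b := 2) one_lt_two hx h
          rwa [logb_e2] at this
        rw [max_eq_right h, logb_e2]
        have hn : -(n:ℝ) ≤ (n:ℝ) := neg_le_self (Nat.cast_nonneg n)
        rw [min_eq_left hn, min_eq_left (hL.trans hn), max_eq_right hL]
      · have hL : -(n:ℝ) ≤ L x := by
          have := Real.logb_le_logb_of_le (b := 2) one_lt_two (hεpos n) h
          rwa [logb_e2] at this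
        rw [max_eq_left h,
          max_eq_left (le_min hL (neg_le_self (Nat.cast_nonneg n)))]
    -- integrable or not
    by_cases hLint : Integrable L μ
    · -- finite KL case
      have hkl : klDiv2 μ ν = ((∫ x, L x ∂μ : ℝ) : EReal) := by
        rw [klDiv2, if_pos ⟨hac, hLint⟩]
      rw [hkl, EReal.coe_lt_coe_iff] at hc
      have T1 : Tendsto (fun n => ∫ x, fn n x ∂μ) atTop (𝓝 (∫ x, L x ∂μ)) := by
        refine tendsto_integral_of_dominated_convergence (fun x => |L x|)
          (fun n => (hfnm n).aestronglyMeasurable) hLint.abs ?_ ?_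
        · intro n
          filter_upwards [haefn] with x hx
          rw [Real.norm_eq_abs, hx n]
          rcases le_total 0 (L x) with hL0 | hL0
          · rw [max_eq_left (le_trans (neg_nonpos_of_nonneg (Nat.cast_nonneg n))
              (le_min hL0 (Nat.cast_nonneg n))), abs_of_nonneg (le_min hL0 (Nat.cast_nonneg n)),
              abs_of_nonneg hL0]
            exact min_le_left _ _
          · rcases le_total (L x) (-(n:ℝ)) with h1 | h1
            · rw [min_eq_left (le_trans hL0 (Nat.cast_nonneg n)), max_eq_right h1,
                abs_of_nonpos (neg_nonpos_of_nonneg (Nat.cast_nonneg n)), abs_of_nonpos hL0,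
                neg_neg]
              linarith
            · rw [min_eq_left (le_trans hL0 (Nat.cast_nonneg n)), max_eq_left h1]
        · filter_upwards [haefn] with x hx
          have heq : ∀ᶠ n : ℕ in atTop, max (min (L x) (n:ℝ)) (-(n:ℝ)) = L x := by
            filter_upwards [eventually_ge_atTop ⌈|L x|⌉₊] with n hn
            have hn' : |L x| ≤ (n:ℝ) := le_trans (Nat.le_ceil _) (Nat.cast_le.2 hn)
            rw [min_eq_left (le_trans (le_abs_self _) hn'),
              max_eq_left (le_trans (neg_le_neg hn') (neg_abs_le _))]
          refine Tendsto.congr' ?_ tendsto_const_nhds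
          filter_upwards [heq] with n h
          rw [hx n, h]
      have TD : Tendsto (fun n => DVR (fn n) μ ν) atTop (𝓝 (∫ x, L x ∂μ)) := by
        have := T1.sub Tlog
        simpa [DVR] using this
      obtain ⟨n, hn⟩ := (TD.eventually (eventually_gt_nhds hc)).exists
      exact lemB2 μ ν (hfnm n) (hfnb n) hn
    · -- infinite KL case
      set Lneg : I01 → ℝ := fun x => max (-L x) 0 with hLneg
      set Lpos : I01 → ℝ := fun x => max (L x) 0 with hLpos
      have hLnegm : Measurable Lneg := hLm.neg.max measurable_const
      have hLposm : Measurable Lpos := hLm.max measurable_const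
      have hLneg_int : Integrable Lneg μ := by
        refine (MeasureTheory.integrable_rnDeriv_smul_iff hac).1 ?_
        refine integrable_of_bounded ν ((htm.smul hLnegm).aestronglyMeasurable)
          (B := (Real.log 2)⁻¹) (fun x => ?_)
        have hlog2 : (0:ℝ) < Real.log 2 := Real.log_pos one_lt_two
        simp only [smul_eq_mul]
        rcases eq_or_lt_of_le (ht0 x) with h0 | h0
        · rw [show (μ.rnDeriv ν x).toReal = 0 from h0.symm]
          simp only [zero_mul, abs_zero]
          positivity
        · rcases le_total 1 (t x) with h1 | h1
          · have : L x ≥ 0 := Real.logb_nonneg one_lt_two h1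
            rw [hLneg]
            simp only [max_eq_right (neg_nonpos_of_nonneg this), mul_zero, abs_zero]
            positivity
          · have hLx : Lneg x = -Real.log (t x) / Real.log 2 := by
              rw [hLneg]
              simp only
              rw [max_eq_left]
              · rw [hLdef]; simp only [Real.logb]; ring
              · rw [hLdef]
                simp only [Real.logb, neg_nonneg]
                apply div_nonpos_of_nonpos_of_nonneg _ hlog2.le
                exact Real.log_nonpos h0.le h1
            rw [hLx]
            have hkey : t x * -Real.log (t x) ≤ 1 := by
              have h2 : Real.log (t x)⁻¹ ≤ (t x)⁻¹ - 1 :=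
                Real.log_le_sub_one_of_pos (inv_pos.2 h0)
              rw [Real.log_inv] at h2
              have h3 : t x * -Real.log (t x) ≤ t x * ((t x)⁻¹ - 1) :=
                mul_le_mul_of_nonneg_left h2 h0.le
              have h4 : t x * ((t x)⁻¹ - 1) = 1 - t x := by
                field_simp
              nlinarith
            rw [abs_of_nonneg, mul_comm (t x), div_mul_eq_mul_div]
            · rw [div_le_iff₀ hlog2]
              rw [inv_mul_cancel₀ hlog2.ne']
              nlinarith
            · apply mul_nonneg h0.le
              apply div_nonneg _ hlog2.le
              rw [neg_nonneg]
              exact Real.log_nonpos h0.le h1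
      have hLpos_nonint : ¬ Integrable Lpos μ := by
        intro hint
        apply hLint
        have : L = fun x => Lpos x - Lneg x := by
          funext x
          rw [hLpos, hLneg]
          simp only
          rcases le_total (L x) 0 with h | h
          · rw [max_eq_right h, max_eq_left (by linarith)]; ring
          · rw [max_eq_left h, max_eq_right (by linarith)]; ring
        rw [this]
        exact hint.sub hLneg_int
      -- lintegral blow-up
      set J : ℕ → ENNReal := fun n => ∫⁻ x, ENNReal.ofReal (min (Lpos x) (n:ℝ)) ∂μ with hJ
      have hJmono : Monotone J := by
        intro m n hmn
        refine lintegral_mono (fun x => ENNReal.ofReal_le_ofReal ?_)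
        exact min_le_min le_rfl (Nat.cast_le.2 hmn)
      have hJsup : (⨆ n, J n) = ⊤ := by
        have h1 : (⨆ n, J n) = ∫⁻ x, ENNReal.ofReal (Lpos x) ∂μ := by
          rw [← lintegral_iSup (fun n => (hLposm.min measurable_const).ennreal_ofReal)
            (fun m n hmn x => ENNReal.ofReal_le_ofReal
            (min_le_min le_rfl (Nat.cast_le.2 hmn)))]
          congr 1
          funext x
          apply le_antisymm
          · exact iSup_le fun n => ENNReal.ofReal_le_ofReal (min_le_left _ _)
          · have : ENNReal.ofReal (Lpos x) = ENNReal.ofReal (min (Lpos x) (⌈Lpos x⌉₊ : ℝ)) := by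
              rw [min_eq_left (Nat.le_ceil _)]
            rw [this]
            exact le_iSup (fun n : ℕ => ENNReal.ofReal (min (Lpos x) (n:ℝ))) ⌈Lpos x⌉₊
        rw [h1]
        by_contra hne
        apply hLpos_nonint
        refine ⟨hLposm.aestronglyMeasurable, ?_⟩
        have h0f : 0 ≤ᵐ[μ] Lpos := Eventually.of_forall fun x => le_max_right _ _
        rw [hasFiniteIntegral_iff_ofReal h0f]
        exact lt_top_iff_ne_top.2 hne
      have hJfin : ∀ n, J n ≠ ⊤ := by
        intro n
        have : J n ≤ ∫⁻ _x, ENNReal.ofReal (n:ℝ) ∂μ :=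
          lintegral_mono (fun x => ENNReal.ofReal_le_ofReal (min_le_right _ _))
        rw [lintegral_const] at this
        exact ne_top_of_le_ne_top (by simp : ENNReal.ofReal (n:ℝ) * μ Set.univ ≠ ⊤) this
      have hInJ : ∀ n : ℕ, ∫ x, min (Lpos x) (n:ℝ) ∂μ = (J n).toReal := by
        intro n
        have h0f : 0 ≤ᵐ[μ] (fun x => min (Lpos x) (n:ℝ)) :=
          Eventually.of_forall fun x => le_min (le_max_right _ _) (Nat.cast_nonneg n)
        rw [hJ, integral_eq_lintegral_of_nonneg_ae h0f
          ((hLposm.min measurable_const).aestronglyMeasurable)]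
      -- pick n large
      set A : ℝ := ∫ x, Lneg x ∂μ with hA
      set C : ℝ := max (c + A + 2) 0 with hC
      have hEv1 : ∀ᶠ n : ℕ in atTop, ENNReal.ofReal C ≤ J n := by
        have : ∃ n, ENNReal.ofReal C ≤ J n := by
          by_contra hcon
          push_neg at hcon
          have : (⨆ n, J n) ≤ ENNReal.ofReal C := iSup_le fun n => (hcon n).le
          rw [hJsup] at this
          exact (lt_irrefl ⊤ (lt_of_le_of_lt this (by simp [ENNReal.ofReal_lt_top]))).elim
        obtain ⟨n0, hn0⟩ := this
        filter_upwards [eventually_ge_atTop n0] with n hn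
        exact le_trans hn0 (hJmono hn)
      have hEv2 : ∀ᶠ n : ℕ in atTop, |Real.logb 2 (∫ x, e2 (fn n x) ∂ν)| ≤ 1 := by
        have h1 := Tlog.eventually (eventually_le_nhds (by norm_num : (0:ℝ) < 1))
        have h2 := Tlog.eventually (eventually_ge_nhds (by norm_num : (-1:ℝ) < 0))
        filter_upwards [h1, h2] with n ha hb
        rw [abs_le]
        exact ⟨hb, ha⟩
      obtain ⟨n, hn1, hn2⟩ := (hEv1.and hEv2).exists
      -- lower bound on ∫ fn n dμ
      have hfn_int : Integrable (fn n) μ :=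
        integrable_of_bounded μ (hfnm n).aestronglyMeasurable (hfnb n)
      have hmin_int : Integrable (fun x => min (Lpos x) (n:ℝ)) μ := by
        refine integrable_of_bounded μ ((hLposm.min measurable_const).aestronglyMeasurable)
          (B := (n:ℝ)) (fun x => ?_)
        rw [abs_of_nonneg (le_min (le_max_right _ _) (Nat.cast_nonneg n))]
        exact min_le_right _ _
      have hlow : ∫ x, (min (Lpos x) (n:ℝ)) - Lneg x ∂μ ≤ ∫ x, fn n x ∂μ := by
        refine integral_mono_ae (hmin_int.sub hLneg_int) hfn_int ?_
        filter_upwards [haefn] with x hx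
        rw [hx n]
        rcases le_total 0 (L x) with h | h
        · have hLn : Lneg x = 0 := by
            rw [hLneg]; simp only; rw [max_eq_right (by linarith)]
          have hLp : Lpos x = L x := by
            rw [hLpos]; simp only; rw [max_eq_left h]
          rw [hLn, hLp, sub_zero]
          exact le_max_left _ _
        · have hLn : Lneg x = -L x := by
            rw [hLneg]; simp only; rw [max_eq_left (by linarith)]
          have hLp : Lpos x = 0 := by
            rw [hLpos]; simp only; rw [max_eq_right h]
          rw [hLn, hLp]
          have : min (0:ℝ) (n:ℝ) = 0 := min_eq_left (Nat.cast_nonneg n)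
          rw [this, zero_sub, neg_neg]
          calc L x = min (L x) (n:ℝ) := (min_eq_left (le_trans h (Nat.cast_nonneg n))).symm
            _ ≤ max (min (L x) (n:ℝ)) (-(n:ℝ)) := le_max_left _ _
      have hCle : C ≤ ∫ x, min (Lpos x) (n:ℝ) ∂μ := by
        rw [hInJ n]
        calc C = (ENNReal.ofReal C).toReal := by
              rw [ENNReal.toReal_ofReal (le_max_right _ _)]
          _ ≤ (J n).toReal := ENNReal.toReal_mono (hJfin n) hn1
      have hintsub : ∫ x, (min (Lpos x) (n:ℝ)) - Lneg x ∂μ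
          = (∫ x, min (Lpos x) (n:ℝ) ∂μ) - A := by
        rw [hA, integral_sub hmin_int hLneg_int]
      have hfinal : c < DVR (fn n) μ ν := by
        rw [DVR]
        have h1 : c + A + 2 ≤ C := le_max_left _ _
        have h2 := abs_le.1 hn2
        have h3 : (∫ x, min (Lpos x) (n:ℝ) ∂μ) - A ≤ ∫ x, fn n x ∂μ := by
          rw [← hintsub]; exact hlow
        linarith [hCle, h2.1, h2.2]
      exact lemB2 μ ν (hfnm n) (hfnb n) hfinal


lemma cont_bound {f : I01 → ℝ} (hf : Continuous f) : ∃ B : ℝ, ∀ x, |f x| ≤ B := by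
  obtain ⟨C, hC⟩ := isCompact_univ.exists_bound_of_continuousOn hf.continuousOn
  exact ⟨C, fun x => by simpa [Real.norm_eq_abs] using hC x (Set.mem_univ x)⟩

lemma cont_integrable {f : I01 → ℝ} (hf : Continuous f) (μ : Measure I01) [IsFiniteMeasure μ] :
    Integrable f μ := by
  obtain ⟨B, hB⟩ := cont_bound hf
  exact integrable_of_bounded μ hf.measurable.aestronglyMeasurable hB

lemma lemC {μ ν : Measure I01} [IsProbabilityMeasure μ] [IsProbabilityMeasure ν]
    {μs νs : ℕ → Measure I01} (hμs : ∀ j, IsProbabilityMeasure (μs j))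
    (hνs : ∀ j, IsProbabilityMeasure (νs j))
    (hμ : ∀ f : I01 → ℝ, Continuous f →
      Tendsto (fun j => ∫ x, f x ∂(μs j)) atTop (𝓝 (∫ x, f x ∂μ)))
    (hν : ∀ f : I01 → ℝ, Continuous f →
      Tendsto (fun j => ∫ x, f x ∂(νs j)) atTop (𝓝 (∫ x, f x ∂ν)))
    {c : ℝ} (hc : (c : EReal) < klDiv2 μ ν) :
    ∀ᶠ j in atTop, (c : EReal) < klDiv2 (μs j) (νs j) := by
  obtain ⟨g, hgc, hgd⟩ := lemB μ ν c hc
  obtain ⟨B, hB⟩ := cont_bound hgc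
  have hEpos : 0 < ∫ x, e2 (g x) ∂ν := by
    have hint : Integrable (fun x => e2 (g x)) ν := cont_integrable (continuous_e2.comp hgc) ν
    calc (0:ℝ) < e2 (-B) := e2_pos _
      _ = ∫ _x, e2 (-B) ∂ν := by simp
      _ ≤ ∫ x, e2 (g x) ∂ν := integral_mono (integrable_const _) hint
          (fun x => e2_mono ((abs_le.1 (hB x)).1))
  have hDVRj : Tendsto (fun j => DVR g (μs j) (νs j)) atTop (𝓝 (DVR g μ ν)) := by
    have T1 := hμ g hgc
    have T2 := hν (fun x => e2 (g x)) (continuous_e2.comp hgc)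
    have Tlog : Tendsto (fun j => Real.logb 2 (∫ x, e2 (g x) ∂(νs j))) atTop
        (𝓝 (Real.logb 2 (∫ x, e2 (g x) ∂ν))) :=
      (((Real.continuousAt_log hEpos.ne').div_const _).tendsto).comp T2
    exact T1.sub Tlog
  filter_upwards [hDVRj.eventually (eventually_gt_nhds hgd)] with j hj
  haveI := hμs j
  haveI := hνs j
  calc (c:EReal) < (DVR g (μs j) (νs j) : EReal) := EReal.coe_lt_coe_iff.2 hj
    _ ≤ klDiv2 (μs j) (νs j) := lemA _ _ hgc.measurable hB

lemma mix_isProb {q : ℝ} (h0 : 0 ≤ q) (h1 : q ≤ 1) (μ ν : Measure I01)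
    [IsProbabilityMeasure μ] [IsProbabilityMeasure ν] : IsProbabilityMeasure (mix q μ ν) := by
  constructor
  rw [mix]
  simp only [Measure.coe_add, Pi.add_apply, Measure.smul_apply, smul_eq_mul, measure_univ,
    mul_one]
  rw [← ENNReal.ofReal_add h0 (by linarith)]
  norm_num

lemma mix_zero (μ ν : Measure I01) : mix 0 μ ν = ν := by
  rw [mix]
  simp

lemma mix_integral {q : ℝ} (h0 : 0 ≤ q) (h1 : q ≤ 1) (μ ν : Measure I01)
    [IsFiniteMeasure μ] [IsFiniteMeasure ν] {f : I01 → ℝ} (hf : Continuous f) :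
    ∫ x, f x ∂(mix q μ ν) = q * ∫ x, f x ∂μ + (1 - q) * ∫ x, f x ∂ν := by
  rw [mix, integral_add_measure ((cont_integrable hf μ).smul_measure ENNReal.ofReal_ne_top)
    ((cont_integrable hf ν).smul_measure ENNReal.ofReal_ne_top),
    integral_smul_measure, integral_smul_measure,
    ENNReal.toReal_ofReal h0, ENNReal.toReal_ofReal (by linarith : (0:ℝ) ≤ 1 - q)]
  simp [smul_eq_mul]

lemma ereal_le_of_forall {x y : EReal} (h : ∀ c : ℝ, (c : EReal) < x → (c : EReal) ≤ y) :
    x ≤ y := by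
  by_contra hxy
  push_neg at hxy
  obtain ⟨c, hc1, hc2⟩ := EReal.exists_between_coe_real hxy
  exact absurd (h c hc2) (not_le.2 hc1)

end KLAux

open KLAux

theorem stmt_1 (p : ℝ) (hp : p ∈ Set.Ico (0 : ℝ) 1)
    (pj : ℕ → ℝ) (hpj : ∀ j, pj j ∈ Set.Ico (0 : ℝ) 1)
    (hpj_tendsto : Tendsto pj atTop (nhds p))
    (μK μN : ProbabilityMeasure I01) (μKj μNj : ℕ → ProbabilityMeasure I01)
    (hK_tendsto : Tendsto μKj atTop (nhds μK))
    (hN_tendsto : Tendsto μNj atTop (nhds μN)) :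
    Fp p (μK : Measure I01) (μN : Measure I01)
      ≤ Filter.liminf (fun j => Fp (pj j) (μKj j : Measure I01) (μNj j : Measure I01)) atTop := by
  -- integral convergence for the two sequences
  have hKint : ∀ f : I01 → ℝ, Continuous f →
      Tendsto (fun j => ∫ x, f x ∂(μKj j : Measure I01)) atTop
        (𝓝 (∫ x, f x ∂(μK : Measure I01))) := by
    intro f hf
    have := MeasureTheory.ProbabilityMeasure.tendsto_iff_forall_integral_tendsto.mp hK_tendsto
      (BoundedContinuousFunction.mkOfCompact ⟨f, hf⟩)
    simpa using this
  have hNint : ∀ f : I01 → ℝ, Continuous f →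
      Tendsto (fun j => ∫ x, f x ∂(μNj j : Measure I01)) atTop
        (𝓝 (∫ x, f x ∂(μN : Measure I01))) := by
    intro f hf
    have := MeasureTheory.ProbabilityMeasure.tendsto_iff_forall_integral_tendsto.mp hN_tendsto
      (BoundedContinuousFunction.mkOfCompact ⟨f, hf⟩)
    simpa using this
  set m : Measure I01 := mix p (μK : Measure I01) (μN : Measure I01) with hmdef
  set mj : ℕ → Measure I01 := fun j => mix (pj j) (μKj j : Measure I01) (μNj j : Measure I01)
    with hmjdef
  haveI hmP : IsProbabilityMeasure m := mix_isProb hp.1 hp.2.le _ _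
  have hmjP : ∀ j, IsProbabilityMeasure (mj j) := fun j => mix_isProb (hpj j).1 (hpj j).2.le _ _
  have hmint : ∀ f : I01 → ℝ, Continuous f →
      Tendsto (fun j => ∫ x, f x ∂(mj j)) atTop (𝓝 (∫ x, f x ∂m)) := by
    intro f hf
    have hT : Tendsto (fun j => pj j * (∫ x, f x ∂(μKj j : Measure I01))
        + (1 - pj j) * (∫ x, f x ∂(μNj j : Measure I01))) atTop
        (𝓝 (p * (∫ x, f x ∂(μK : Measure I01)) + (1 - p) * (∫ x, f x ∂(μN : Measure I01)))) :=
      (hpj_tendsto.mul (hKint f hf)).add ((tendsto_const_nhds.sub hpj_tendsto).mul (hNint f hf))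
    have heq : ∀ j, ∫ x, f x ∂(mj j) = pj j * (∫ x, f x ∂(μKj j : Measure I01))
        + (1 - pj j) * (∫ x, f x ∂(μNj j : Measure I01)) := fun j =>
      mix_integral (hpj j).1 (hpj j).2.le _ _ hf
    rw [hmdef, mix_integral hp.1 hp.2.le _ _ hf]
    exact Tendsto.congr (fun j => (heq j).symm) hT
  have hKjP : ∀ j, IsProbabilityMeasure ((μKj j : Measure I01)) := fun j => (μKj j).2
  have hNjP : ∀ j, IsProbabilityMeasure ((μNj j : Measure I01)) := fun j => (μNj j).2
  rcases eq_or_lt_of_le hp.1 with hp0 | hp0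
  · -- case p = 0
    have hp0' : p = 0 := hp0.symm
    have hFp : Fp p (μK : Measure I01) (μN : Measure I01)
        = klDiv2 (μK : Measure I01) (μN : Measure I01) := by
      simp only [Fp, if_pos hp0']
    rw [hFp]
    have hmN : m = (μN : Measure I01) := by rw [hmdef, hp0', mix_zero]
    refine ereal_le_of_forall (fun c hc => ?_)
    have hc' : (c : EReal) < klDiv2 (μK : Measure I01) m := by rw [hmN]; exact hc
    have hev := lemC hKjP hmjP hKint hmint hc'
    refine le_liminf_of_le (by isBoundedDefault) ?_
    filter_upwards [hev] with j hj
    haveI := hKjP j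
    haveI := hNjP j
    haveI := hmjP j
    by_cases hpj0 : pj j = 0
    · have hmjN : mj j = (μNj j : Measure I01) := by rw [hmjdef]; simp only; rw [hpj0, mix_zero]
      rw [hmjN] at hj
      simp only [Fp, if_pos hpj0]
      exact hj.le
    · simp only [Fp, if_neg hpj0]
      have hcj0 : (0:ℝ) ≤ (1 - pj j) / pj j :=
        div_nonneg (by linarith [(hpj j).2]) (lt_of_le_of_ne (hpj j).1 (Ne.symm hpj0)).le
      have h2 : (0:EReal) ≤ (((1 - pj j) / pj j : ℝ) : EReal) * klDiv2 (μNj j : Measure I01) (mj j) := by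
        apply mul_nonneg _ (klDiv2_nonneg _ _)
        exact_mod_cast hcj0
      calc (c:EReal) ≤ klDiv2 (μKj j : Measure I01) (mj j) := hj.le
        _ = klDiv2 (μKj j : Measure I01) (mj j) + 0 := (add_zero _).symm
        _ ≤ _ := add_le_add le_rfl h2
  · -- case p > 0
    have hFp : Fp p (μK : Measure I01) (μN : Measure I01)
        = klDiv2 (μK : Measure I01) m + (((1 - p) / p : ℝ) : EReal) * klDiv2 (μN : Measure I01) m := by
      simp only [Fp, if_neg (ne_of_gt hp0), hmdef]
    rw [hFp]
    set C : ℝ := (1 - p) / p with hCdef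
    have hCpos : 0 < C := div_pos (by linarith [hp.2]) hp0
    set a : EReal := klDiv2 (μK : Measure I01) m with hadef
    set b : EReal := klDiv2 (μN : Measure I01) m with hbdef
    have ha0 : (0:EReal) ≤ a := klDiv2_nonneg _ _
    have hb0 : (0:EReal) ≤ b := klDiv2_nonneg _ _
    refine ereal_le_of_forall (fun c hc => ?_)
    obtain ⟨α, β, hαa, hβb, hcαβ⟩ : ∃ α β : ℝ, (α:EReal) < a ∧ (β:EReal) < b ∧ c < α + C * β := by
      by_cases hatop : a = ⊤
      · refine ⟨c + C + 1, -1, ?_, ?_, by nlinarith⟩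
        · rw [hatop]; exact EReal.coe_lt_top _
        · refine lt_of_lt_of_le ?_ hb0
          have h01 : ((-1:ℝ):EReal) < ((0:ℝ):EReal) := by
            rw [EReal.coe_lt_coe_iff]; norm_num
          simpa using h01
      · have habot : a ≠ ⊥ := ne_bot_of_le_ne_bot (by simp) ha0
        have har : a = ((a.toReal : ℝ) : EReal) := (EReal.coe_toReal hatop habot).symm
        by_cases hbtop : b = ⊤
        · refine ⟨a.toReal - 1, (c - a.toReal + 1) / C + 1, ?_, ?_, ?_⟩
          · rw [har]; exact_mod_cast (by linarith : a.toReal - 1 < a.toReal)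
          · rw [hbtop]; exact EReal.coe_lt_top _
          · have hkey : C * ((c - a.toReal + 1) / C + 1) = c - a.toReal + 1 + C := by
              field_simp
            rw [hkey]
            linarith
        · have hbbot : b ≠ ⊥ := ne_bot_of_le_ne_bot (by simp) hb0
          have hbr : b = ((b.toReal : ℝ) : EReal) := (EReal.coe_toReal hbtop hbbot).symm
          have hcreal : c < a.toReal + C * b.toReal := by
            have : (c : EReal) < ((a.toReal + C * b.toReal : ℝ) : EReal) := by
              rw [EReal.coe_add, EReal.coe_mul]
              rw [har, hbr] at hc
              exact_mod_cast hc
            exact_mod_cast this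
          set δ : ℝ := (a.toReal + C * b.toReal - c) / (2 * (1 + C)) with hδdef
          have hδpos : 0 < δ := div_pos (by linarith) (by linarith)
          have hδval : δ * (2 * (1 + C)) = a.toReal + C * b.toReal - c := by
            rw [hδdef]; field_simp
          refine ⟨a.toReal - δ, b.toReal - δ, ?_, ?_, by
            nlinarith [mul_pos hδpos (by linarith : (0:ℝ) < 1 + C)]⟩
          · rw [har]; exact_mod_cast (by linarith : a.toReal - δ < a.toReal)
          · rw [hbr]; exact_mod_cast (by linarith : b.toReal - δ < b.toReal)
    have hev1 := lemC hKjP hmjP hKint hmint hαa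
    have hev2 := lemC hNjP hmjP hNint hmint hβb
    have hevp : ∀ᶠ j in atTop, 0 < pj j :=
      hpj_tendsto.eventually (eventually_gt_nhds hp0)
    have hevc : ∀ᶠ j in atTop, c < α + ((1 - pj j) / pj j) * β := by
      have hTc : Tendsto (fun j => α + ((1 - pj j) / pj j) * β) atTop (𝓝 (α + C * β)) := by
        refine tendsto_const_nhds.add (Tendsto.mul_const β ?_)
        exact (tendsto_const_nhds.sub hpj_tendsto).div hpj_tendsto (ne_of_gt hp0)
      exact hTc.eventually (eventually_gt_nhds hcαβ)
    refine le_liminf_of_le (by isBoundedDefault) ?_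
    filter_upwards [hev1, hev2, hevp, hevc] with j h1 h2 h3 h4
    haveI := hKjP j
    haveI := hNjP j
    haveI := hmjP j
    simp only [Fp, if_neg (ne_of_gt h3)]
    have hcj0 : (0:ℝ) ≤ (1 - pj j) / pj j := div_nonneg (by linarith [(hpj j).2]) h3.le
    calc (c:EReal) ≤ ((α + ((1 - pj j) / pj j) * β : ℝ) : EReal) := EReal.coe_le_coe_iff.2 h4.le
      _ = (α:EReal) + (((1 - pj j) / pj j : ℝ) : EReal) * (β:EReal) := by
          rw [EReal.coe_add, EReal.coe_mul]
      _ ≤ klDiv2 (μKj j : Measure I01) (mj j)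
          + (((1 - pj j) / pj j : ℝ) : EReal) * klDiv2 (μNj j : Measure I01) (mj j) := by
          refine add_le_add h1.le ?_
          refine mul_le_mul_of_nonneg_left h2.le ?_
          exact_mod_cast hcj0
end

section
/- For fixed μK, μN ∈ P([0,1]), the map p ↦ F_p(μK, μN) is continuous on [0,1). In particular, as p → 0⁺, F_p(μK, μN) → KL(μK ‖ μN), both when KL(μK ‖ μN) is finite and when it is +∞ (in which case F_p(μK, μN) → +∞). -/
/- STATEMENT 2: For fixed μK, μN ∈ P([0,1]), p ↦ F_p(μK, μN) is continuous on [0,1);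
   in particular F_p(μK, μN) → KL(μK ‖ μN) as p → 0⁺ (in EReal, covering both the
   finite and the infinite case). -/

open MeasureTheory Filter Topology

set_option linter.unusedSectionVars false
namespace Stmt2Aux

open Real MeasureTheory Filter Topology
open scoped ENNReal NNReal

/-! ### Pointwise real lemmas -/

lemma log2_pos : (0:ℝ) < Real.log 2 := Real.log_pos one_lt_two

lemma pt_lower {A d : ℝ} (hA : 0 ≤ A) (hd : 0 < d) :
    (A - d) / Real.log 2 ≤ A * Real.logb 2 (A / d) := by
  rcases hA.eq_or_lt with h | h
  · rw [← h]
    rw [zero_mul, zero_sub, div_nonpos_iff]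
    right
    exact ⟨by linarith, log2_pos.le⟩
  · have h1 : Real.log (d / A) ≤ d / A - 1 := Real.log_le_sub_one_of_pos (by positivity)
    have h2 : Real.log (A / d) = - Real.log (d / A) := by
      rw [← Real.log_inv]
      congr 1
      field_simp
    have h4 := mul_le_mul_of_nonneg_left h1 h.le
    have h5 : A * (d / A - 1) = d - A := by field_simp
    have h3 : A - d ≤ A * (- Real.log (d / A)) := by nlinarith
    calc (A - d) / Real.log 2 ≤ (A * (- Real.log (d / A))) / Real.log 2 := by
          gcongr
      _ = A * Real.logb 2 (A / d) := by
          rw [Real.logb, h2, mul_div_assoc]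

lemma pt_upper {A d p : ℝ} (hA : 0 ≤ A) (hA1 : A ≤ 1) (hd : 0 < d) (hp : 0 < p)
    (hp1 : p ≤ 1) (hpd : p * A ≤ d) :
    A * Real.logb 2 (A / d) ≤ Real.logb 2 (1 / p) := by
  have hlogp : 0 ≤ Real.logb 2 (1 / p) :=
    Real.logb_nonneg one_lt_two (by rw [le_div_iff₀ hp]; linarith)
  rcases hA.eq_or_lt with h | h
  · rw [← h, zero_mul]; exact hlogp
  · have h1 : A / d ≤ 1 / p := by
      rw [div_le_div_iff₀ hd hp]; nlinarith
    have h2 : Real.logb 2 (A / d) ≤ Real.logb 2 (1 / p) :=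
      Real.logb_le_logb_of_le one_lt_two (by positivity) h1
    calc A * Real.logb 2 (A / d) ≤ A * Real.logb 2 (1 / p) :=
          mul_le_mul_of_nonneg_left h2 hA
      _ ≤ 1 * Real.logb 2 (1 / p) := mul_le_mul_of_nonneg_right hA1 hlogp
      _ = _ := one_mul _

lemma pt_dens_pos {A B p : ℝ} (hA : 0 ≤ A) (hB : 0 ≤ B) (hAB : A + B = 1)
    (hp : 0 < p) (hp1 : p < 1) : 0 < p * A + (1 - p) * B := by
  rcases hA.eq_or_lt with h | h
  · nlinarith
  · nlinarith

lemma pt_abs_bound {A B p p₀ p₁ : ℝ} (hA : 0 ≤ A) (hB : 0 ≤ B) (hAB : A + B = 1)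
    (hp₀ : 0 < p₀) (h₀ : p₀ ≤ p) (h₁ : p ≤ p₁) (hp₁ : p₁ < 1) :
    |A * Real.logb 2 (A / (p * A + (1 - p) * B))| ≤ Real.logb 2 (1 / p₀) + 1 / Real.log 2 := by
  have hp : 0 < p := lt_of_lt_of_le hp₀ h₀
  have hp1 : p < 1 := lt_of_le_of_lt h₁ hp₁
  have hd : 0 < p * A + (1 - p) * B := pt_dens_pos hA hB hAB hp hp1
  have hd1 : p * A + (1 - p) * B ≤ 1 := by nlinarith
  have hlogp₀ : 0 ≤ Real.logb 2 (1 / p₀) :=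
    Real.logb_nonneg one_lt_two (by rw [le_div_iff₀ hp₀]; linarith)
  rw [abs_le]
  constructor
  · have h2 := pt_lower hA hd
    have hm : (-1:ℝ) ≤ A - (p * A + (1 - p) * B) := by linarith
    have h3 : -(1 / Real.log 2) ≤ (A - (p * A + (1 - p) * B)) / Real.log 2 := by
      calc -(1 / Real.log 2) = (-1) / Real.log 2 := by ring
        _ ≤ _ := by gcongr
    linarith
  · have h2 := pt_upper hA (by linarith) hd hp hp1.le (by nlinarith)
    have h3 : Real.logb 2 (1 / p) ≤ Real.logb 2 (1 / p₀) := by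
      apply Real.logb_le_logb_of_le one_lt_two (by positivity)
      gcongr
    have h4 : 0 < 1 / Real.log 2 := by positivity
    linarith

lemma pt_cont {A B q : ℝ} (hA : 0 ≤ A) (hd : 0 < q * A + (1 - q) * B) :
    ContinuousAt (fun p => A * Real.logb 2 (A / (p * A + (1 - p) * B))) q := by
  rcases hA.eq_or_lt with h | h
  · have : (fun p => A * Real.logb 2 (A / (p * A + (1 - p) * B))) = fun _ => 0 := by
      funext p; rw [← h, zero_mul]
    rw [this]; exact continuousAt_const
  · apply ContinuousAt.mul continuousAt_const
    have hdc : ContinuousAt (fun p : ℝ => p * A + (1 - p) * B) q := by fun_prop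
    have hAd : A / (q * A + (1 - q) * B) ≠ 0 := by positivity
    have hq : ContinuousAt (fun p : ℝ => A / (p * A + (1 - p) * B)) q :=
      continuousAt_const.div hdc (ne_of_gt hd)
    exact (hq.log hAd).div_const _


lemma pt_lower_const {A B p : ℝ} (hA : 0 ≤ A) (hB : 0 ≤ B) (hAB : A + B = 1)
    (hp : 0 < p) (hp1 : p < 1) :
    -(1 / Real.log 2) ≤ A * Real.logb 2 (A / (p * A + (1 - p) * B)) := by
  have hd := pt_dens_pos hA hB hAB hp hp1
  have hd1 : p * A + (1 - p) * B ≤ 1 := by nlinarith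
  have hm : (-1:ℝ) ≤ A - (p * A + (1 - p) * B) := by linarith
  calc -(1 / Real.log 2) = (-1) / Real.log 2 := by ring
    _ ≤ (A - (p * A + (1 - p) * B)) / Real.log 2 := by gcongr
    _ ≤ _ := pt_lower hA hd

lemma pt_fLim_lower {A B : ℝ} (hA : 0 ≤ A) (hB1 : B ≤ 1) (hBpos : 0 < B) :
    -(1 / Real.log 2) ≤ A * Real.logb 2 (A / B) := by
  have hm : (-1:ℝ) ≤ A - B := by linarith
  calc -(1 / Real.log 2) = (-1) / Real.log 2 := by ring
    _ ≤ (A - B) / Real.log 2 := by gcongr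
    _ ≤ _ := pt_lower hA hBpos

lemma pt_bound2 {A B p : ℝ} (hA : 0 ≤ A) (hB : 0 ≤ B) (hAB : A + B = 1) (hBpos : 0 < B)
    (hp : 0 < p) (hp2 : p ≤ 1/2) :
    |A * Real.logb 2 (A / (p * A + (1 - p) * B))|
      ≤ |A * Real.logb 2 (A / B)| + A + 1 / Real.log 2 := by
  have hp1 : p < 1 := by linarith
  have hL := log2_pos
  rw [abs_le]
  constructor
  · have h1 := pt_lower_const hA hB hAB hp hp1
    have h0 : 0 ≤ |A * Real.logb 2 (A / B)| + A := by positivity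
    linarith
  · rcases hA.eq_or_lt with h | hApos
    · rw [← h, zero_mul]
      simp only [abs_zero, zero_mul, abs_nonneg, add_zero, zero_add]
      positivity
    · have hd : 0 < p * A + (1 - p) * B := pt_dens_pos hA hB hAB hp hp1
      have h1 : A / (p * A + (1 - p) * B) ≤ A / ((1 - p) * B) := by
        gcongr
        · nlinarith
      have h2 : Real.log (A / (p * A + (1 - p) * B)) ≤ Real.log (A / ((1 - p) * B)) :=
        Real.log_le_log (div_pos hApos hd) h1
      have h3 : A / ((1 - p) * B) = (A / B) * (1 - p)⁻¹ := by
        field_simp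
      have h4 : Real.log (A / ((1 - p) * B)) = Real.log (A / B) - Real.log (1 - p) := by
        rw [h3, Real.log_mul (ne_of_gt (div_pos hApos hBpos))
          (ne_of_gt (inv_pos.2 (by linarith : (0:ℝ) < 1 - p))), Real.log_inv]
        ring
      have h5 : -Real.log (1 - p) ≤ Real.log 2 := by
        have h6 : Real.log ((2:ℝ)⁻¹) ≤ Real.log (1 - p) :=
          Real.log_le_log (by norm_num) (by linarith)
        rw [Real.log_inv] at h6
        linarith
      have h7 : Real.log (A / (p * A + (1 - p) * B)) ≤ Real.log (A / B) + Real.log 2 := by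
        linarith
      have h8 : A * Real.logb 2 (A / (p * A + (1 - p) * B))
          ≤ A * (Real.logb 2 (A / B) + 1) := by
        apply mul_le_mul_of_nonneg_left _ hA
        rw [Real.logb, Real.logb]
        rw [show Real.log (A / B) / Real.log 2 + 1
          = (Real.log (A / B) + Real.log 2) / Real.log 2 by field_simp]
        gcongr
      have h9 : A * Real.logb 2 (A / B) ≤ |A * Real.logb 2 (A / B)| := le_abs_self _
      have h10 : 0 < 1 / Real.log 2 := by positivity
      nlinarith

lemma pt_tendsto2 {A B : ℝ} (hA : 0 ≤ A) (hBpos : 0 < B) :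
    Tendsto (fun p => A * Real.logb 2 (A / (p * A + (1 - p) * B)))
      (𝓝[Set.Ioo (0:ℝ) 1] 0) (𝓝 (A * Real.logb 2 (A / B))) := by
  have hd0 : 0 < 0 * A + (1 - 0) * B := by simpa using hBpos
  simpa using (pt_cont hA hd0).tendsto.mono_left nhdsWithin_le_nhds

lemma pt_Feq {A B p : ℝ} (hBpos : 0 < B) (hp : 0 < p) (hp1 : p < 1) :
    B * Real.logb 2 (B / (p * A + (1 - p) * B)) / p
      = (-B / Real.log 2) * (Real.log (1 + p * (A / B - 1)) / p) := by
  have hident : 1 + p * (A / B - 1) = (p * A + (1 - p) * B) / B := by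
    field_simp
    ring
  have harg : B / (p * A + (1 - p) * B) = (1 + p * (A / B - 1))⁻¹ := by
    rw [hident, inv_div]
  rw [harg, Real.logb, Real.log_inv]
  have hL := log2_pos.ne'
  field_simp <;> ring

lemma pt_bound3 {A B p : ℝ} (hA : 0 ≤ A) (hB : 0 ≤ B) (hAB : A + B = 1)
    (hp : 0 < p) (hp2 : p ≤ 1/2) :
    |B * Real.logb 2 (B / (p * A + (1 - p) * B)) / p| ≤ 2 / Real.log 2 := by
  have hp1 : p < 1 := by linarith
  have hL := log2_pos
  rcases hB.eq_or_lt with h | hBpos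
  · rw [← h, zero_mul, zero_div, abs_zero]
    positivity
  · set t := A / B with ht
    have htnn : 0 ≤ t := div_nonneg hA hB
    have hBt : B * t = A := by
      rw [ht]; field_simp
    have hu : 0 < 1 + p * (t - 1) := by nlinarith [mul_nonneg hp.le htnn]
    have hlog_up : Real.log (1 + p * (t - 1)) ≤ p * (t - 1) := by
      have := Real.log_le_sub_one_of_pos hu; linarith
    have hlog_lo : -(2 * p) ≤ Real.log (1 + p * (t - 1)) := by
      have h1 : (1:ℝ) - p ≤ 1 + p * (t - 1) := by nlinarith [mul_nonneg hp.le htnn]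
      have h2 : Real.log (1 - p) ≤ Real.log (1 + p * (t - 1)) :=
        Real.log_le_log (by linarith) h1
      have h4 := Real.log_le_sub_one_of_pos (x := (1 - p)⁻¹)
        (inv_pos.2 (by linarith : (0:ℝ) < 1 - p))
      rw [Real.log_inv] at h4
      have hne : (1:ℝ) - p ≠ 0 := by linarith
      have h5 : (1 - p)⁻¹ - 1 = p / (1 - p) := by
        rw [inv_eq_one_div]
        field_simp
        ring
      have h6 : p / (1 - p) ≤ 2 * p := by
        rw [div_le_iff₀ (by linarith)]; nlinarith
      linarith
    set q := Real.log (1 + p * (t - 1)) / p with hq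
    have hq1 : q ≤ t - 1 := by
      rw [hq, div_le_iff₀ hp]; linarith [hlog_up]
    have hq2 : -2 ≤ q := by
      rw [hq, le_div_iff₀ hp]; linarith [hlog_lo]
    have hx1 : -(2:ℝ) ≤ (-B) * q := by nlinarith [mul_le_mul_of_nonneg_left hq1 hB]
    have hx2 : (-B) * q ≤ 2 := by nlinarith [mul_le_mul_of_nonneg_left hq2 hB]
    have e : (-B / Real.log 2) * q = ((-B) * q) / Real.log 2 := by ring
    rw [pt_Feq hBpos hp hp1, ← hq, e, abs_le]
    constructor
    · calc -(2 / Real.log 2) = (-2) / Real.log 2 := by ring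
        _ ≤ _ := by gcongr
    · gcongr

lemma pt_tendsto3 {A B : ℝ} (hA : 0 ≤ A) (hBpos : 0 < B) :
    Tendsto (fun p => B * Real.logb 2 (B / (p * A + (1 - p) * B)) / p)
      (𝓝[Set.Ioo (0:ℝ) 1] 0) (𝓝 ((B - A) / Real.log 2)) := by
  set t := A / B with ht
  have hBt : B * t = A := by rw [ht]; field_simp
  have hlin : HasDerivAt (fun p : ℝ => 1 + p * (t - 1)) (t - 1) 0 := by
    simpa using ((hasDerivAt_id (0:ℝ)).mul_const (t - 1)).const_add 1
  have hlog : HasDerivAt (fun p : ℝ => Real.log (1 + p * (t - 1))) (t - 1) 0 := by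
    have h0 : (1:ℝ) + 0 * (t - 1) ≠ 0 := by norm_num
    have := (Real.hasDerivAt_log h0).comp 0 hlin
    simpa [Function.comp_def] using this
  have hslope := hasDerivAt_iff_tendsto_slope.1 hlog
  have h2 : Tendsto (fun p => Real.log (1 + p * (t - 1)) / p) (𝓝[≠] (0:ℝ)) (𝓝 (t - 1)) := by
    apply hslope.congr'
    filter_upwards [eventually_mem_nhdsWithin] with p hp
    rw [slope_def_field]
    norm_num
  have h3 : Tendsto (fun p => Real.log (1 + p * (t - 1)) / p)
      (𝓝[Set.Ioo (0:ℝ) 1] 0) (𝓝 (t - 1)) :=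
    h2.mono_left (nhdsWithin_mono 0 (fun x hx => ne_of_gt hx.1))
  have h4 := h3.const_mul (-B / Real.log 2)
  have hval : (-B / Real.log 2) * (t - 1) = (B - A) / Real.log 2 := by
    rw [← hBt]; ring
  rw [hval] at h4
  apply h4.congr'
  filter_upwards [eventually_mem_nhdsWithin] with p hp
  exact (pt_Feq hBpos hp.1 hp.2).symm

/-! ### Setup : densities w.r.t. `μK + μN` -/

variable {α : Type*} [MeasurableSpace α]

noncomputable def Af (μK μN : Measure α) : α → ℝ := fun x => (μK.rnDeriv (μK + μN) x).toReal
noncomputable def Bf (μK μN : Measure α) : α → ℝ := fun x => (μN.rnDeriv (μK + μN) x).toReal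
noncomputable def dens (μK μN : Measure α) (p : ℝ) : α → ℝ :=
  fun x => p * Af μK μN x + (1 - p) * Bf μK μN x
noncomputable def f1 (μK μN : Measure α) (p : ℝ) : α → ℝ :=
  fun x => Af μK μN x * Real.logb 2 (Af μK μN x / dens μK μN p x)
noncomputable def f2 (μK μN : Measure α) (p : ℝ) : α → ℝ :=
  fun x => Bf μK μN x * Real.logb 2 (Bf μK μN x / dens μK μN p x)
noncomputable def K1 (μK μN : Measure α) (p : ℝ) : ℝ := ∫ x, f1 μK μN p x ∂(μK + μN)
noncomputable def K2 (μK μN : Measure α) (p : ℝ) : ℝ := ∫ x, f2 μK μN p x ∂(μK + μN)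
noncomputable def Gf (μK μN : Measure α) (p : ℝ) : ℝ :=
  K1 μK μN p + ((1 - p) / p) * K2 μK μN p
noncomputable def fLim (μK μN : Measure α) : α → ℝ :=
  fun x => Af μK μN x * Real.logb 2 (Af μK μN x / Bf μK μN x)

lemma Af_swap (μK μN : Measure α) : Af μN μK = Bf μK μN := by
  unfold Af Bf; rw [add_comm μN μK]

lemma Bf_swap (μK μN : Measure α) : Bf μN μK = Af μK μN := by
  unfold Af Bf; rw [add_comm μN μK]

lemma f1_swap (μK μN : Measure α) (p : ℝ) : f1 μN μK (1 - p) = f2 μK μN p := by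
  funext x
  unfold f1 f2 dens
  rw [Af_swap μK μN, Bf_swap μK μN]
  have : (1 - p) * Bf μK μN x + (1 - (1 - p)) * Af μK μN x
      = p * Af μK μN x + (1 - p) * Bf μK μN x := by ring
  rw [this]

lemma K2_swap (μK μN : Measure α) (p : ℝ) : K2 μK μN p = K1 μN μK (1 - p) := by
  unfold K1 K2
  rw [f1_swap, add_comm μN μK]

lemma mix_swap (μK μN : Measure α) (p : ℝ) : mix (1 - p) μN μK = mix p μK μN := by
  unfold mix
  rw [show (1:ℝ) - (1 - p) = p from by ring, add_comm]

lemma meas_Af (μK μN : Measure α) : Measurable (Af μK μN) :=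
  (Measure.measurable_rnDeriv _ _).ennreal_toReal

lemma meas_Bf (μK μN : Measure α) : Measurable (Bf μK μN) :=
  (Measure.measurable_rnDeriv _ _).ennreal_toReal

lemma meas_dens (μK μN : Measure α) (p : ℝ) : Measurable (dens μK μN p) :=
  ((meas_Af μK μN).const_mul _).add ((meas_Bf μK μN).const_mul _)

lemma meas_logb {f : α → ℝ} (hf : Measurable f) :
    Measurable (fun x => Real.logb 2 (f x)) :=
  (Real.measurable_log.comp hf).div_const _

lemma meas_f1 (μK μN : Measure α) (p : ℝ) : Measurable (f1 μK μN p) :=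
  (meas_Af μK μN).mul (meas_logb ((meas_Af μK μN).div (meas_dens μK μN p)))

lemma meas_f2 (μK μN : Measure α) (p : ℝ) : Measurable (f2 μK μN p) :=
  (meas_Bf μK μN).mul (meas_logb ((meas_Bf μK μN).div (meas_dens μK μN p)))

lemma meas_fLim (μK μN : Measure α) : Measurable (fLim μK μN) :=
  (meas_Af μK μN).mul (meas_logb ((meas_Af μK μN).div (meas_Bf μK μN)))

lemma haK (μK μN : Measure α) : μK ≪ μK + μN :=
  Measure.absolutelyContinuous_of_le (Measure.le_add_right le_rfl)

lemma haN (μK μN : Measure α) : μN ≪ μK + μN :=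
  Measure.absolutelyContinuous_of_le (Measure.le_add_left le_rfl)

section Main

variable (μK μN : Measure α) [IsFiniteMeasure μK] [IsFiniteMeasure μN]

lemma ae_AB : ∀ᵐ x ∂(μK + μN),
    0 ≤ Af μK μN x ∧ 0 ≤ Bf μK μN x ∧ Af μK μN x + Bf μK μN x = 1 := by
  have h1 := Measure.rnDeriv_add' μK μN (μK + μN)
  have h2 := Measure.rnDeriv_self (μK + μN)
  have h3 := Measure.rnDeriv_ne_top μK (μK + μN)
  have h4 := Measure.rnDeriv_ne_top μN (μK + μN)
  filter_upwards [h1, h2, h3, h4] with x hx1 hx2 hx3 hx4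
  refine ⟨ENNReal.toReal_nonneg, ENNReal.toReal_nonneg, ?_⟩
  unfold Af Bf
  rw [← ENNReal.toReal_add hx3 hx4]
  have h5 : μK.rnDeriv (μK + μN) x + μN.rnDeriv (μK + μN) x = 1 := by
    have := hx1.symm.trans hx2
    simpa using this
  rw [h5, ENNReal.toReal_one]

noncomputable def cK (p : ℝ) : α → ℝ≥0∞ :=
  fun x => ENNReal.ofReal p * μK.rnDeriv (μK + μN) x
    + ENNReal.ofReal (1 - p) * μN.rnDeriv (μK + μN) x

lemma meas_cK (p : ℝ) : Measurable (cK μK μN p) :=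
  ((Measure.measurable_rnDeriv _ _).const_mul _).add
    ((Measure.measurable_rnDeriv _ _).const_mul _)

lemma mix_eq (p : ℝ) : mix p μK μN = (μK + μN).withDensity (cK μK μN p) := by
  have h1 : (ENNReal.ofReal p) • μK
      = (μK + μN).withDensity (fun x => ENNReal.ofReal p * μK.rnDeriv (μK + μN) x) := by
    conv_lhs => rw [← Measure.withDensity_rnDeriv_eq μK (μK + μN) (haK μK μN)]
    rw [← withDensity_smul _ (Measure.measurable_rnDeriv _ _)]
    rfl
  have h2 : (ENNReal.ofReal (1 - p)) • μN
      = (μK + μN).withDensity (fun x => ENNReal.ofReal (1 - p) * μN.rnDeriv (μK + μN) x) := by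
    conv_lhs => rw [← Measure.withDensity_rnDeriv_eq μN (μK + μN) (haN μK μN)]
    rw [← withDensity_smul _ (Measure.measurable_rnDeriv _ _)]
    rfl
  rw [mix, h1, h2, ← withDensity_add_left ((Measure.measurable_rnDeriv _ _).const_mul _)]
  rfl

lemma cK_ne_zero {p : ℝ} (hp : p ∈ Set.Ioo (0:ℝ) 1) :
    ∀ᵐ x ∂(μK + μN), cK μK μN p x ≠ 0 := by
  filter_upwards [ae_AB μK μN] with x hx h0
  unfold cK at h0
  rw [add_eq_zero] at h0
  obtain ⟨ha, hb⟩ := h0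
  rw [mul_eq_zero] at ha hb
  have hp0 : ENNReal.ofReal p ≠ 0 := by
    simp only [ne_eq, ENNReal.ofReal_eq_zero, not_le]; exact hp.1
  have hp1 : ENNReal.ofReal (1 - p) ≠ 0 := by
    simp only [ne_eq, ENNReal.ofReal_eq_zero, not_le]; linarith [hp.2]
  have hA0 : Af μK μN x = 0 := by
    unfold Af; rw [ha.resolve_left hp0]; simp
  have hB0 : Bf μK μN x = 0 := by
    unfold Bf; rw [hb.resolve_left hp1]; simp
  rw [hA0, hB0] at hx
  linarith [hx.2.2]

lemma cK_ne_top (p : ℝ) : ∀ᵐ x ∂(μK + μN), cK μK μN p x ≠ ⊤ := by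
  filter_upwards [Measure.rnDeriv_ne_top μK (μK + μN),
    Measure.rnDeriv_ne_top μN (μK + μN)] with x h1 h2
  exact ENNReal.add_ne_top.2
    ⟨ENNReal.mul_ne_top ENNReal.ofReal_ne_top h1, ENNReal.mul_ne_top ENNReal.ofReal_ne_top h2⟩

lemma ac_mix {p : ℝ} (hp : p ∈ Set.Ioo (0:ℝ) 1) : μK ≪ mix p μK μN := by
  rw [mix_eq]
  exact (haK μK μN).trans
    (withDensity_absolutelyContinuous' (meas_cK μK μN p).aemeasurable (cK_ne_zero μK μN hp))

lemma ac_mix' {p : ℝ} (hp : p ∈ Set.Ioo (0:ℝ) 1) : μN ≪ mix p μK μN := by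
  rw [mix_eq]
  exact (haN μK μN).trans
    (withDensity_absolutelyContinuous' (meas_cK μK μN p).aemeasurable (cK_ne_zero μK μN hp))

lemma cK_toReal {p : ℝ} (hp : p ∈ Set.Ioo (0:ℝ) 1) :
    ∀ᵐ x ∂(μK + μN), (cK μK μN p x).toReal = dens μK μN p x := by
  filter_upwards [Measure.rnDeriv_ne_top μK (μK + μN),
    Measure.rnDeriv_ne_top μN (μK + μN)] with x h1 h2
  unfold cK dens Af Bf
  rw [ENNReal.toReal_add (ENNReal.mul_ne_top ENNReal.ofReal_ne_top h1)
    (ENNReal.mul_ne_top ENNReal.ofReal_ne_top h2), ENNReal.toReal_mul, ENNReal.toReal_mul,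
    ENNReal.toReal_ofReal hp.1.le, ENNReal.toReal_ofReal (by linarith [hp.2] : (0:ℝ) ≤ 1 - p)]

lemma rnDeriv_mix_toReal {p : ℝ} (hp : p ∈ Set.Ioo (0:ℝ) 1) :
    (fun x => (μK.rnDeriv (mix p μK μN) x).toReal)
      =ᵐ[μK + μN] fun x => Af μK μN x / dens μK μN p x := by
  rw [mix_eq]
  have h := Measure.rnDeriv_withDensity_right μK (μK + μN) (meas_cK μK μN p).aemeasurable
    (cK_ne_zero μK μN hp) (cK_ne_top μK μN p)
  filter_upwards [h, cK_toReal μK μN hp] with x hx hx2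
  rw [hx, ENNReal.toReal_mul, ENNReal.toReal_inv, hx2]
  unfold Af
  rw [inv_mul_eq_div]

/-! ### Transport lemmas between `μK` and `μK + μN` -/

lemma integrable_transport (g : α → ℝ) :
    Integrable g μK ↔ Integrable (fun x => Af μK μN x * g x) (μK + μN) := by
  constructor
  · intro h
    rw [← Measure.withDensity_rnDeriv_eq μK (μK + μN) (haK μK μN)] at h
    rw [integrable_withDensity_iff (Measure.measurable_rnDeriv _ _)
      (Measure.rnDeriv_lt_top _ _)] at h
    exact h.congr (Filter.Eventually.of_forall fun x => mul_comm _ _)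
  · intro h
    rw [← Measure.withDensity_rnDeriv_eq μK (μK + μN) (haK μK μN),
      integrable_withDensity_iff (Measure.measurable_rnDeriv _ _)
      (Measure.rnDeriv_lt_top _ _)]
    exact h.congr (Filter.Eventually.of_forall fun x => mul_comm _ _)

lemma integral_transport (g : α → ℝ) :
    ∫ x, g x ∂μK = ∫ x, Af μK μN x * g x ∂(μK + μN) := by
  conv_lhs => rw [← Measure.withDensity_rnDeriv_eq μK (μK + μN) (haK μK μN)]
  rw [← withDensity_congr_ae (coe_toNNReal_ae_eq (Measure.rnDeriv_lt_top μK (μK + μN)))]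
  rw [integral_withDensity_eq_integral_smul
    ((Measure.measurable_rnDeriv μK (μK + μN)).ennreal_toNNReal) g]
  exact integral_congr_ae (Filter.Eventually.of_forall fun x => by
    simp [Af, NNReal.smul_def, ENNReal.toReal])

/-! ### Identification of `klDiv2` along the mixture -/

lemma integrable_f1 {p : ℝ} (hp : p ∈ Set.Ioo (0:ℝ) 1) :
    Integrable (f1 μK μN p) (μK + μN) := by
  refine Integrable.mono' (integrable_const (Real.logb 2 (1 / p) + 1 / Real.log 2))
    (meas_f1 μK μN p).aestronglyMeasurable ?_
  filter_upwards [ae_AB μK μN] with x hx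
  rw [Real.norm_eq_abs]
  exact pt_abs_bound hx.1 hx.2.1 hx.2.2 hp.1 le_rfl le_rfl hp.2

lemma klDiv2_mix {p : ℝ} (hp : p ∈ Set.Ioo (0:ℝ) 1) :
    klDiv2 μK (mix p μK μN) = ((K1 μK μN p : ℝ) : EReal) := by
  have hae : (fun x => Real.logb 2 ((μK.rnDeriv (mix p μK μN) x).toReal))
      =ᵐ[μK] fun x => Real.logb 2 (Af μK μN x / dens μK μN p x) :=
    ((rnDeriv_mix_toReal μK μN hp).filter_mono (haK μK μN).ae_le).fun_comp (Real.logb 2)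
  have hint1 : Integrable (fun x => Af μK μN x * Real.logb 2 (Af μK μN x / dens μK μN p x))
      (μK + μN) := integrable_f1 μK μN hp
  have hint2 : Integrable (fun x => Real.logb 2 (Af μK μN x / dens μK μN p x)) μK :=
    (integrable_transport μK μN _).2 hint1
  have hint : Integrable (fun x => Real.logb 2 ((μK.rnDeriv (mix p μK μN) x).toReal)) μK :=
    hint2.congr hae.symm
  unfold klDiv2
  rw [if_pos ⟨ac_mix μK μN hp, hint⟩]
  congr 1
  rw [integral_congr_ae hae, integral_transport μK μN]
  rfl

lemma klDiv2_mix' {p : ℝ} (hp : p ∈ Set.Ioo (0:ℝ) 1) :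
    klDiv2 μN (mix p μK μN) = ((K2 μK μN p : ℝ) : EReal) := by
  rw [← mix_swap μK μN p, K2_swap,
    klDiv2_mix μN μK (by constructor <;> [linarith [hp.2]; linarith [hp.1]])]

lemma Fp_eq {p : ℝ} (hp : p ∈ Set.Ioo (0:ℝ) 1) :
    Fp p μK μN = ((Gf μK μN p : ℝ) : EReal) := by
  unfold Fp
  rw [if_neg (ne_of_gt hp.1), klDiv2_mix μK μN hp, klDiv2_mix' μK μN hp]
  unfold Gf
  norm_cast

/-! ### Nonnegativity (Gibbs) -/

lemma integrable_Af : Integrable (Af μK μN) (μK + μN) :=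
  Measure.integrable_toReal_rnDeriv

lemma integrable_Bf : Integrable (Bf μK μN) (μK + μN) := by
  have := Measure.integrable_toReal_rnDeriv (μ := μN) (ν := μK + μN)
  exact this

lemma integrable_dens (p : ℝ) : Integrable (dens μK μN p) (μK + μN) :=
  ((integrable_Af μK μN).const_mul p).add ((integrable_Bf μK μN).const_mul (1 - p))

variable [IsProbabilityMeasure μK] [IsProbabilityMeasure μN]

lemma integral_Af : ∫ x, Af μK μN x ∂(μK + μN) = 1 := by
  unfold Af
  rw [Measure.integral_toReal_rnDeriv (haK μK μN)]
  simp

lemma integral_Bf : ∫ x, Bf μK μN x ∂(μK + μN) = 1 := by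
  unfold Bf
  rw [Measure.integral_toReal_rnDeriv (haN μK μN)]
  simp

lemma K1_nonneg {p : ℝ} (hp : p ∈ Set.Ioo (0:ℝ) 1) : 0 ≤ K1 μK μN p := by
  have hle : (fun x => (Af μK μN x - dens μK μN p x) / Real.log 2)
      ≤ᵐ[μK + μN] f1 μK μN p := by
    filter_upwards [ae_AB μK μN] with x hx
    exact pt_lower hx.1 (pt_dens_pos hx.1 hx.2.1 hx.2.2 hp.1 hp.2)
  have hint1 : Integrable (fun x => (Af μK μN x - dens μK μN p x) / Real.log 2) (μK + μN) :=
    ((integrable_Af μK μN).sub (integrable_dens μK μN p)).div_const _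
  have h := integral_mono_ae hint1 (integrable_f1 μK μN hp) hle
  have hz : ∫ x, (Af μK μN x - dens μK μN p x) / Real.log 2 ∂(μK + μN) = 0 := by
    rw [integral_div, integral_sub (integrable_Af μK μN) (integrable_dens μK μN p)]
    have : ∫ x, dens μK μN p x ∂(μK + μN) = 1 := by
      unfold dens
      rw [integral_add ((integrable_Af μK μN).const_mul p)
        ((integrable_Bf μK μN).const_mul (1 - p)), integral_const_mul, integral_const_mul,
        integral_Af, integral_Bf]
      ring
    rw [this, integral_Af]
    simp
  rw [hz] at h
  exact h

lemma K2_nonneg {p : ℝ} (hp : p ∈ Set.Ioo (0:ℝ) 1) : 0 ≤ K2 μK μN p := by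
  rw [K2_swap]
  exact K1_nonneg μN μK (by constructor <;> [linarith [hp.2]; linarith [hp.1]])

/-! ### Continuity on (0,1) -/

lemma contK1 {q : ℝ} (hq : q ∈ Set.Ioo (0:ℝ) 1) : ContinuousAt (K1 μK μN) q := by
  have hq2 : 0 < q / 2 := by linarith [hq.1]
  have hq3 : (1 + q) / 2 < 1 := by linarith [hq.2]
  have hmem : Set.Ioo (q / 2) ((1 + q) / 2) ∈ 𝓝 q :=
    Ioo_mem_nhds (by linarith [hq.1]) (by linarith [hq.2])
  refine continuousAt_of_dominated (bound := fun _ =>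
      Real.logb 2 (1 / (q / 2)) + 1 / Real.log 2) ?_ ?_ ?_ ?_
  · exact Filter.Eventually.of_forall fun p => (meas_f1 μK μN p).aestronglyMeasurable
  · filter_upwards [hmem] with p hp
    filter_upwards [ae_AB μK μN] with x hx
    rw [Real.norm_eq_abs]
    exact pt_abs_bound hx.1 hx.2.1 hx.2.2 hq2 hp.1.le hp.2.le hq3
  · exact integrable_const _
  · filter_upwards [ae_AB μK μN] with x hx
    exact pt_cont hx.1 (pt_dens_pos hx.1 hx.2.1 hx.2.2 hq.1 hq.2)

lemma contK2 {q : ℝ} (hq : q ∈ Set.Ioo (0:ℝ) 1) : ContinuousAt (K2 μK μN) q := by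
  have h : K2 μK μN = (K1 μN μK) ∘ (fun p => 1 - p) := by
    funext p; exact K2_swap μK μN p
  rw [h]
  exact ContinuousAt.comp
    (contK1 μN μK (by constructor <;> [linarith [hq.2]; linarith [hq.1]]))
    ((continuous_const.sub continuous_id).continuousAt)

/-! ### Behaviour of B under absolute continuity -/

lemma ae_B_ne_zero (hac : μK ≪ μN) : ∀ᵐ x ∂(μK + μN), μN.rnDeriv (μK + μN) x ≠ 0 := by
  set S := {x | μN.rnDeriv (μK + μN) x = 0} with hS
  have hs : MeasurableSet S := (Measure.measurable_rnDeriv _ _) (measurableSet_singleton 0)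
  have hνN : μN S = 0 := by
    conv_lhs => rw [← Measure.withDensity_rnDeriv_eq μN (μK + μN) (haN μK μN)]
    rw [withDensity_apply _ hs]
    have : ∀ᵐ x ∂(μK + μN).restrict S, μN.rnDeriv (μK + μN) x = 0 :=
      (ae_restrict_iff' hs).2 (Filter.Eventually.of_forall fun x hx => hx)
    rw [setLIntegral_congr_fun hs (fun x hx => hx)]
    simp
  have hνK : μK S = 0 := hac hνN
  have hsum : (μK + μN) S = 0 := by
    simp [Measure.add_apply, hνN, hνK]
  rw [ae_iff]
  convert hsum using 2
  simp [hS]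

lemma ae_B_pos (hac : μK ≪ μN) : ∀ᵐ x ∂(μK + μN), 0 < Bf μK μN x := by
  filter_upwards [ae_B_ne_zero μK μN hac, Measure.rnDeriv_ne_top μN (μK + μN)] with x h1 h2
  exact ENNReal.toReal_pos h1 h2

lemma rnDeriv_base_toReal (hac : μK ≪ μN) :
    (fun x => (μK.rnDeriv μN x).toReal) =ᵐ[μK + μN] fun x => Af μK μN x / Bf μK μN x := by
  have h := Measure.rnDeriv_withDensity_right μK (μK + μN)
    (Measure.measurable_rnDeriv μN (μK + μN)).aemeasurable (ae_B_ne_zero μK μN hac)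
    (Measure.rnDeriv_ne_top μN (μK + μN))
  rw [Measure.withDensity_rnDeriv_eq μN (μK + μN) (haN μK μN)] at h
  filter_upwards [h] with x hx
  rw [hx, ENNReal.toReal_mul, ENNReal.toReal_inv]
  unfold Af Bf
  rw [inv_mul_eq_div]

lemma integrable_base_iff (hac : μK ≪ μN) :
    Integrable (fun x => Real.logb 2 ((μK.rnDeriv μN x).toReal)) μK
      ↔ Integrable (fLim μK μN) (μK + μN) := by
  have hae : (fun x => Real.logb 2 ((μK.rnDeriv μN x).toReal))
      =ᵐ[μK] fun x => Real.logb 2 (Af μK μN x / Bf μK μN x) :=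
    ((rnDeriv_base_toReal μK μN hac).filter_mono (haK μK μN).ae_le).fun_comp (Real.logb 2)
  rw [integrable_congr hae, integrable_transport μK μN]
  exact Iff.rfl

lemma integral_base (hac : μK ≪ μN) :
    ∫ x, Real.logb 2 ((μK.rnDeriv μN x).toReal) ∂μK
      = ∫ x, fLim μK μN x ∂(μK + μN) := by
  have hae : (fun x => Real.logb 2 ((μK.rnDeriv μN x).toReal))
      =ᵐ[μK] fun x => Real.logb 2 (Af μK μN x / Bf μK μN x) :=
    ((rnDeriv_base_toReal μK μN hac).filter_mono (haK μK μN).ae_le).fun_comp (Real.logb 2)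
  rw [integral_congr_ae hae, integral_transport μK μN]
  rfl

/-! ### Limits as p → 0⁺ -/

lemma eventually_half : ∀ᶠ p in 𝓝[Set.Ioo (0:ℝ) 1] (0:ℝ), 0 < p ∧ p ≤ 1/2 := by
  have h1 : ∀ᶠ p in 𝓝[Set.Ioo (0:ℝ) 1] (0:ℝ), p ∈ Set.Ioo (0:ℝ) 1 := eventually_mem_nhdsWithin
  have h2 : Set.Iio (1/2 : ℝ) ∈ 𝓝[Set.Ioo (0:ℝ) 1] (0:ℝ) :=
    nhdsWithin_le_nhds (Iio_mem_nhds (by norm_num))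
  filter_upwards [h1, h2] with p hp1 hp2
  exact ⟨hp1.1, le_of_lt hp2⟩

lemma tendsto_K1 (hac : μK ≪ μN) (hint : Integrable (fLim μK μN) (μK + μN)) :
    Tendsto (K1 μK μN) (𝓝[Set.Ioo (0:ℝ) 1] 0)
      (𝓝 (∫ x, fLim μK μN x ∂(μK + μN))) := by
  refine tendsto_integral_filter_of_dominated_convergence
    (fun x => |fLim μK μN x| + Af μK μN x + 1 / Real.log 2) ?_ ?_ ?_ ?_
  · exact Filter.Eventually.of_forall fun p => (meas_f1 μK μN p).aestronglyMeasurable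
  · filter_upwards [eventually_half] with p hp
    filter_upwards [ae_AB μK μN, ae_B_pos μK μN hac] with x hx hxB
    rw [Real.norm_eq_abs]
    exact pt_bound2 hx.1 hx.2.1 hx.2.2 hxB hp.1 hp.2
  · exact (hint.abs.add (integrable_Af μK μN)).add (integrable_const _)
  · filter_upwards [ae_AB μK μN, ae_B_pos μK μN hac] with x hx hxB
    exact pt_tendsto2 hx.1 hxB

lemma tendsto_K2_div (hac : μK ≪ μN) :
    Tendsto (fun p => K2 μK μN p / p) (𝓝[Set.Ioo (0:ℝ) 1] 0) (𝓝 0) := by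
  have hzero : ∫ x, (Bf μK μN x - Af μK μN x) / Real.log 2 ∂(μK + μN) = 0 := by
    rw [integral_div, integral_sub (integrable_Bf μK μN) (integrable_Af μK μN),
      integral_Bf, integral_Af]
    simp
  have h := tendsto_integral_filter_of_dominated_convergence (μ := μK + μN)
      (F := fun p x => f2 μK μN p x / p)
      (f := fun x => (Bf μK μN x - Af μK μN x) / Real.log 2)
      (l := 𝓝[Set.Ioo (0:ℝ) 1] 0) (fun _ => 2 / Real.log 2) ?_ ?_ ?_ ?_
  · rw [hzero] at h
    apply h.congr
    intro p
    exact integral_div p (f2 μK μN p)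
  · exact Filter.Eventually.of_forall fun p =>
      ((meas_f2 μK μN p).div_const _).aestronglyMeasurable
  · filter_upwards [eventually_half] with p hp
    filter_upwards [ae_AB μK μN] with x hx
    rw [Real.norm_eq_abs]
    exact pt_bound3 hx.1 hx.2.1 hx.2.2 hp.1 hp.2
  · exact integrable_const _
  · filter_upwards [ae_AB μK μN, ae_B_pos μK μN hac] with x hx hxB
    exact pt_tendsto3 hx.1 hxB

lemma tendsto_T (hac : μK ≪ μN) :
    Tendsto (fun p => ((1 - p) / p) * K2 μK μN p) (𝓝[Set.Ioo (0:ℝ) 1] 0) (𝓝 0) := by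
  have h1 : Tendsto (fun p : ℝ => 1 - p) (𝓝[Set.Ioo (0:ℝ) 1] 0) (𝓝 1) := by
    have h : Tendsto (fun p : ℝ => 1 - p) (𝓝 0) (𝓝 (1 - 0)) :=
      tendsto_const_nhds.sub tendsto_id
    rw [sub_zero] at h
    exact h.mono_left nhdsWithin_le_nhds
  have h2 := h1.mul (tendsto_K2_div μK μN hac)
  rw [mul_zero] at h2
  apply h2.congr
  intro p
  ring

lemma tendsto_top
    (h : ¬(μK ≪ μN ∧ Integrable (fun x => Real.logb 2 ((μK.rnDeriv μN x).toReal)) μK)) :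
    Tendsto (fun p => Fp p μK μN) (𝓝[Set.Ioo (0:ℝ) 1] 0) (𝓝 (⊤ : EReal)) := by
  rw [tendsto_iff_seq_tendsto]
  intro u hu
  have hmem : ∀ᶠ n in atTop, u n ∈ Set.Ioo (0:ℝ) 1 := hu.eventually eventually_mem_nhdsWithin
  set s : ℝ := 1 / Real.log 2 with hs
  set g : ℕ → α → ℝ≥0∞ := fun n x => ENNReal.ofReal (f1 μK μN (u n) x + s) with hg
  have hgmeas : ∀ n, Measurable (g n) := fun n =>
    ((meas_f1 μK μN (u n)).add measurable_const).ennreal_ofReal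
  have fatou := lintegral_liminf_le (μ := μK + μN) (u := atTop) hgmeas
  have htop : ∫⁻ x, liminf (fun n => g n x) atTop ∂(μK + μN) = ⊤ := by
    by_cases hac : μK ≪ μN
    · have hnint : ¬ Integrable (fLim μK μN) (μK + μN) := fun hI =>
        h ⟨hac, (integrable_base_iff μK μN hac).2 hI⟩
      have hae : (fun x => liminf (fun n => g n x) atTop)
          =ᵐ[μK + μN] fun x => ENNReal.ofReal (fLim μK μN x + s) := by
        filter_upwards [ae_AB μK μN, ae_B_pos μK μN hac] with x hx hxB
        have ht : Tendsto (fun n => g n x) atTop (𝓝 (ENNReal.ofReal (fLim μK μN x + s))) := by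
          refine (ENNReal.continuous_ofReal.tendsto _).comp ?_
          exact ((pt_tendsto2 hx.1 hxB).comp hu).add tendsto_const_nhds
        exact ht.liminf_eq
      rw [lintegral_congr_ae hae]
      by_contra hne
      apply hnint
      refine ⟨(meas_fLim μK μN).aestronglyMeasurable, ?_⟩
      have hb : ∀ᵐ x ∂(μK + μN), (‖fLim μK μN x‖₊ : ℝ≥0∞)
          ≤ ENNReal.ofReal (fLim μK μN x + s) + ENNReal.ofReal s := by
        filter_upwards [ae_AB μK μN, ae_B_pos μK μN hac] with x hx hxB
        have hspos : 0 < s := by rw [hs]; positivity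
        have hlow : -s ≤ fLim μK μN x := by
          have hB1 : Bf μK μN x ≤ 1 := by linarith [hx.1, hx.2.2]
          exact pt_fLim_lower hx.1 hB1 hxB
        have habs : |fLim μK μN x| ≤ (fLim μK μN x + s) + s := by
          rw [abs_le]
          constructor <;> linarith
        calc (‖fLim μK μN x‖₊ : ℝ≥0∞) = ENNReal.ofReal |fLim μK μN x| := by
              rw [← Real.norm_eq_abs]; exact (ofReal_norm _).symm
          _ ≤ ENNReal.ofReal ((fLim μK μN x + s) + s) := ENNReal.ofReal_le_ofReal habs
          _ ≤ ENNReal.ofReal (fLim μK μN x + s) + ENNReal.ofReal s := ENNReal.ofReal_add_le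
      rw [HasFiniteIntegral]
      calc ∫⁻ x, (‖fLim μK μN x‖₊ : ℝ≥0∞) ∂(μK + μN)
          ≤ ∫⁻ x, (ENNReal.ofReal (fLim μK μN x + s) + ENNReal.ofReal s) ∂(μK + μN) :=
            lintegral_mono_ae hb
        _ = (∫⁻ x, ENNReal.ofReal (fLim μK μN x + s) ∂(μK + μN))
            + ∫⁻ _, ENNReal.ofReal s ∂(μK + μN) := lintegral_add_right _ measurable_const
        _ < ⊤ := by
            apply ENNReal.add_lt_top.2
            refine ⟨lt_top_iff_ne_top.2 hne, ?_⟩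
            rw [lintegral_const]
            exact ENNReal.mul_lt_top ENNReal.ofReal_lt_top (measure_lt_top _ _)
    · set S := {x | μK.rnDeriv (μK + μN) x ≠ 0 ∧ μN.rnDeriv (μK + μN) x = 0} with hSdef
      have hSmeas : MeasurableSet S :=
        (((Measure.measurable_rnDeriv μK (μK + μN)) (measurableSet_singleton 0)).compl).inter
          ((Measure.measurable_rnDeriv μN (μK + μN)) (measurableSet_singleton 0))
      have hSpos : (μK + μN) S ≠ 0 := by
        intro h0
        apply hac
        refine Measure.AbsolutelyContinuous.mk (fun T hT hT0 => ?_)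
        have hb0 : ∀ᵐ x ∂(μK + μN).restrict T, μN.rnDeriv (μK + μN) x = 0 := by
          have hTz : ∫⁻ x in T, μN.rnDeriv (μK + μN) x ∂(μK + μN) = 0 := by
            rw [← withDensity_apply _ hT, Measure.withDensity_rnDeriv_eq μN (μK + μN) (haN μK μN)]
            exact hT0
          have := (lintegral_eq_zero_iff (Measure.measurable_rnDeriv μN (μK + μN))).1 hTz
          exact this
        have hnotS : ∀ᵐ x ∂(μK + μN).restrict T, x ∉ S := by
          apply ae_restrict_of_ae
          have hS0 : ∀ᵐ x ∂(μK + μN), x ∉ S := by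
            rw [ae_iff]
            simpa using h0
          exact hS0
        have ha0 : ∀ᵐ x ∂(μK + μN).restrict T, μK.rnDeriv (μK + μN) x = 0 := by
          filter_upwards [hb0, hnotS] with x h1 h2
          by_contra h3
          exact h2 ⟨h3, h1⟩
        have hKT : μK T = ∫⁻ x in T, μK.rnDeriv (μK + μN) x ∂(μK + μN) := by
          rw [← withDensity_apply _ hT, Measure.withDensity_rnDeriv_eq μK (μK + μN) (haK μK μN)]
        rw [hKT]
        exact (lintegral_eq_zero_iff (Measure.measurable_rnDeriv μK (μK + μN))).2 ha0
      have h1 : ∀ᵐ x ∂(μK + μN).restrict S, liminf (fun n => g n x) atTop = ⊤ := by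
        filter_upwards [ae_restrict_of_ae (ae_AB μK μN), ae_restrict_mem hSmeas] with x hx hxS
        have hB0 : Bf μK μN x = 0 := by
          unfold Bf; rw [hxS.2]; simp
        have hA1 : Af μK μN x = 1 := by
          have h3 := hx.2.2
          rw [hB0, add_zero] at h3
          exact h3
        have hf1 : ∀ p : ℝ, f1 μK μN p x = Real.logb 2 (1 / p) := by
          intro p
          unfold f1 dens
          rw [hA1, hB0]
          norm_num
        have hu' : Tendsto u atTop (𝓝[>] (0:ℝ)) :=
          hu.mono_right (nhdsWithin_mono 0 (fun y hy => hy.1))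
        have hlb : Tendsto (fun y : ℝ => Real.logb 2 (1 / y)) (𝓝[>] (0:ℝ)) atTop := by
          have h4 : Tendsto (fun y : ℝ => Real.logb 2 y⁻¹) (𝓝[>] (0:ℝ)) atTop :=
            (Real.tendsto_logb_atTop one_lt_two).comp tendsto_inv_nhdsGT_zero
          simpa [one_div] using h4
        have hlim : Tendsto (fun n => f1 μK μN (u n) x) atTop atTop := by
          have := hlb.comp hu'
          apply this.congr
          intro n
          exact (hf1 (u n)).symm
        have ht : Tendsto (fun n => g n x) atTop (𝓝 ⊤) := by
          have h5 : Tendsto (fun n => f1 μK μN (u n) x + s) atTop atTop :=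
            tendsto_atTop_add_const_right atTop s hlim
          exact ENNReal.tendsto_ofReal_atTop.comp h5
        exact ht.liminf_eq
      have hSeq : ∫⁻ x in S, liminf (fun n => g n x) atTop ∂(μK + μN) = ⊤ := by
        rw [lintegral_congr_ae h1, lintegral_const, Measure.restrict_apply_univ]
        exact ENNReal.top_mul hSpos
      exact top_le_iff.1 (hSeq ▸ setLIntegral_le_lintegral S _)
  have hK1 : Tendsto (fun n => K1 μK μN (u n)) atTop atTop := by
    rw [tendsto_atTop]
    intro M
    have hltop : liminf (fun n => ∫⁻ x, g n x ∂(μK + μN)) atTop = ⊤ :=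
      top_le_iff.1 (htop ▸ fatou)
    have hlt : ENNReal.ofReal (M + s * (((μK + μN) Set.univ).toReal))
        < liminf (fun n => ∫⁻ x, g n x ∂(μK + μN)) atTop := by
      rw [hltop]; exact ENNReal.ofReal_lt_top
    filter_upwards [eventually_lt_of_lt_liminf hlt, hmem] with n hn hmemn
    have hintn : Integrable (fun x => f1 μK μN (u n) x + s) (μK + μN) :=
      (integrable_f1 μK μN hmemn).add (integrable_const s)
    have hnn : 0 ≤ᵐ[(μK + μN)] fun x => f1 μK μN (u n) x + s := by
      filter_upwards [ae_AB μK μN] with x hx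
      have h6 := pt_lower_const hx.1 hx.2.1 hx.2.2 hmemn.1 hmemn.2
      have h7 : -s ≤ f1 μK μN (u n) x := h6
      simp only [Pi.zero_apply]
      linarith
    have hgeq : ∫⁻ x, g n x ∂(μK + μN)
        = ENNReal.ofReal (K1 μK μN (u n) + s * (((μK + μN) Set.univ).toReal)) := by
      rw [← ofReal_integral_eq_lintegral_ofReal hintn hnn]
      congr 1
      rw [integral_add (integrable_f1 μK μN hmemn) (integrable_const s), integral_const,
        smul_eq_mul]
      unfold K1
      rw [measureReal_def]
      ring
    rw [hgeq] at hn
    by_contra hMn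
    push_neg at hMn
    have h8 : ENNReal.ofReal (K1 μK μN (u n) + s * (((μK + μN) Set.univ).toReal))
        ≤ ENNReal.ofReal (M + s * (((μK + μN) Set.univ).toReal)) :=
      ENNReal.ofReal_le_ofReal (by linarith)
    exact absurd hn (not_lt.2 h8)
  rw [EReal.tendsto_nhds_top_iff_real]
  intro M
  filter_upwards [hmem, hK1.eventually (eventually_ge_atTop (M + 1))] with n hmemn hMn
  show (M : EReal) < Fp (u n) μK μN
  rw [Fp_eq μK μN hmemn]
  have h2 : 0 ≤ ((1 - u n) / u n) * K2 μK μN (u n) :=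
    mul_nonneg (div_nonneg (by linarith [hmemn.2]) hmemn.1.le) (K2_nonneg μK μN hmemn)
  have h3 : M < Gf μK μN (u n) := by
    unfold Gf
    linarith
  exact_mod_cast h3

lemma tendsto_Fp :
    Tendsto (fun p => Fp p μK μN) (𝓝[Set.Ioo (0:ℝ) 1] 0) (𝓝 (klDiv2 μK μN)) := by
  by_cases h : μK ≪ μN ∧ Integrable (fun x => Real.logb 2 ((μK.rnDeriv μN x).toReal)) μK
  · obtain ⟨hac, hint⟩ := h
    have hintL : Integrable (fLim μK μN) (μK + μN) := (integrable_base_iff μK μN hac).1 hint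
    have hval : klDiv2 μK μN = ((∫ x, fLim μK μN x ∂(μK + μN) : ℝ) : EReal) := by
      unfold klDiv2
      rw [if_pos ⟨hac, hint⟩, integral_base μK μN hac]
    rw [hval]
    have hG : Tendsto (Gf μK μN) (𝓝[Set.Ioo (0:ℝ) 1] 0)
        (𝓝 (∫ x, fLim μK μN x ∂(μK + μN))) := by
      have h9 := (tendsto_K1 μK μN hac hintL).add (tendsto_T μK μN hac)
      rw [add_zero] at h9
      exact h9
    have h10 := EReal.tendsto_coe.2 hG
    apply h10.congr'
    filter_upwards [eventually_mem_nhdsWithin] with p hp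
    exact (Fp_eq μK μN hp).symm
  · have hval : klDiv2 μK μN = (⊤ : EReal) := by
      unfold klDiv2
      rw [if_neg h]
    rw [hval]
    exact tendsto_top μK μN h

end Main

end Stmt2Aux

theorem stmt_2 (μK μN : Measure I01) [IsProbabilityMeasure μK] [IsProbabilityMeasure μN] :
    ContinuousOn (fun p : ℝ => Fp p μK μN) (Set.Ico (0 : ℝ) 1)
      ∧ Tendsto (fun p : ℝ => Fp p μK μN) (nhdsWithin 0 (Set.Ioi 0))
          (nhds (klDiv2 μK μN)) := by
  have hFp0 : Fp 0 μK μN = klDiv2 μK μN := by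
    unfold Fp
    rw [if_pos rfl]
  have hIco : Set.Ico (0:ℝ) 1 = insert 0 (Set.Ioo 0 1) := by
    ext y
    simp only [Set.mem_Ico, Set.mem_insert_iff, Set.mem_Ioo]
    constructor
    · rintro ⟨h1, h2⟩
      rcases h1.eq_or_lt with h3 | h3
      · exact Or.inl h3.symm
      · exact Or.inr ⟨h3, h2⟩
    · rintro (h1 | ⟨h1, h2⟩)
      · exact ⟨le_of_eq h1.symm, by rw [h1]; norm_num⟩
      · exact ⟨h1.le, h2⟩
  constructor
  · intro q hq
    rcases (hq.1).eq_or_lt with h0 | h0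
    · rw [← h0]
      have h1 : ContinuousWithinAt (fun p : ℝ => Fp p μK μN) (Set.Ioo 0 1) 0 := by
        show Tendsto (fun p : ℝ => Fp p μK μN) (𝓝[Set.Ioo 0 1] 0) (𝓝 (Fp 0 μK μN))
        rw [hFp0]
        exact Stmt2Aux.tendsto_Fp μK μN
      rw [hIco]
      exact continuousWithinAt_insert_self.2 h1
    · apply ContinuousAt.continuousWithinAt
      have hev : (fun p : ℝ => Fp p μK μN) =ᶠ[𝓝 q]
          fun p => ((Stmt2Aux.Gf μK μN p : ℝ) : EReal) := by
        filter_upwards [Ioo_mem_nhds h0 hq.2] with p hp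
        exact Stmt2Aux.Fp_eq μK μN hp
      have hG : ContinuousAt (fun p => ((Stmt2Aux.Gf μK μN p : ℝ) : EReal)) q := by
        apply continuous_coe_real_ereal.continuousAt.comp
        have hK1 := Stmt2Aux.contK1 μK μN (⟨h0, hq.2⟩ : q ∈ Set.Ioo (0:ℝ) 1)
        have hK2 := Stmt2Aux.contK2 μK μN (⟨h0, hq.2⟩ : q ∈ Set.Ioo (0:ℝ) 1)
        have hquot : ContinuousAt (fun p : ℝ => (1 - p) / p) q :=
          ((continuous_const.sub continuous_id).continuousAt).div continuousAt_id
            (ne_of_gt h0)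
        exact hK1.add (hquot.mul hK2)
      exact hG.congr hev.symm
  · have hIoi : 𝓝[Set.Ioi (0:ℝ)] 0 = 𝓝[Set.Ioo (0:ℝ) 1] 0 := by
      apply le_antisymm
      · apply nhdsWithin_le_of_mem
        have h5 : Set.Iio (1:ℝ) ∈ 𝓝 (0:ℝ) := Iio_mem_nhds one_pos
        have h6 := inter_mem_nhdsWithin (Set.Ioi (0:ℝ)) h5
        rw [Set.Ioi_inter_Iio] at h6
        exact h6
      · exact nhdsWithin_mono 0 (fun x hx => hx.1)
    rw [hIoi]
    exact Stmt2Aux.tendsto_Fp μK μN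
end

section
/- For fixed μK, μN ∈ P([0,1]), the map p ↦ F_p(μK, μN) is differentiable at every p ∈ (0,1), with derivative ∂/∂p F_p(μK, μN) = −KL(μN ‖ μ_p) / p², where μ_p = p·μK + (1−p)·μN. -/
/- STATEMENT 3: For fixed μK, μN ∈ P([0,1]), p ↦ F_p(μK, μN) is differentiable on (0,1)
   with derivative −KL(μN ‖ μ_p)/p².  (For p ∈ (0,1) the value F_p(μK, μN) is finite, so we
   state differentiability of the real-valued function p ↦ (F_p(μK, μN)).toReal.) -/

open MeasureTheory Filter Topology

/-! ### Auxiliary lemmas -/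

section Aux

variable {α : Type*} [MeasurableSpace α]

lemma abs_mul_logb_le {t : ℝ} (h0 : 0 ≤ t) (h1 : t ≤ 1) : |t * Real.logb 2 t| ≤ 2 := by
  rcases eq_or_lt_of_le h0 with h | h
  · simp [← h]
  · have h2 := (Real.abs_log_mul_self_lt t h h1).le
    have hl2 : (0.6931471803 : ℝ) < Real.log 2 := Real.log_two_gt_d9
    have : t * Real.logb 2 t = Real.log t * t / Real.log 2 := by rw [Real.logb]; ring
    rw [this, abs_div, abs_of_pos (by linarith : (0:ℝ) < Real.log 2),
      div_le_iff₀ (by linarith : (0:ℝ) < Real.log 2)]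
    nlinarith [abs_nonneg (Real.log t * t)]

lemma abs_logb_le_of_mem {c m : ℝ} (hc : 0 < c) (hcm : c ≤ m) (hm1 : m ≤ 1) :
    |Real.logb 2 m| ≤ |Real.logb 2 c| := by
  have h0m : 0 < m := lt_of_lt_of_le hc hcm
  have h1 : Real.logb 2 m ≤ 0 := Real.logb_nonpos one_lt_two h0m.le hm1
  have h2 : Real.logb 2 c ≤ Real.logb 2 m := Real.logb_le_logb_of_le one_lt_two hc hcm
  rw [abs_of_nonpos h1, abs_of_nonpos (h2.trans h1)]
  linarith

lemma integrable_of_bounded' {ξ : Measure α} [IsFiniteMeasure ξ]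
    {f : α → ℝ} (hf : AEStronglyMeasurable f ξ) {C : ℝ} (h : ∀ᵐ x ∂ξ, |f x| ≤ C) :
    Integrable f ξ :=
  Integrable.mono' (integrable_const C) hf (by simpa [Real.norm_eq_abs] using h)

lemma den_sum (μ ν : Measure α) [IsFiniteMeasure μ] [IsFiniteMeasure ν] :
    ∀ᵐ x ∂(μ + ν), (μ.rnDeriv (μ + ν) x).toReal + (ν.rnDeriv (μ + ν) x).toReal = 1 := by
  have h1 := Measure.rnDeriv_add' μ ν (μ + ν)
  have h2 := Measure.rnDeriv_self (μ + ν)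
  have h3 := Measure.rnDeriv_lt_top μ (μ + ν)
  have h4 := Measure.rnDeriv_lt_top ν (μ + ν)
  filter_upwards [h1, h2, h3, h4] with x hx1 hx2 hx3 hx4
  have : μ.rnDeriv (μ + ν) x + ν.rnDeriv (μ + ν) x = 1 := by
    rw [← Pi.add_apply, ← hx1, hx2]
  rw [← ENNReal.toReal_add hx3.ne hx4.ne, this, ENNReal.toReal_one]

lemma mix_pos {q A B : ℝ} (hq0 : 0 < q) (hq1 : q < 1) (h0a : 0 ≤ A) (h0b : 0 ≤ B)
    (h1 : A + B = 1) : 0 < q * A + (1 - q) * B := by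
  rcases le_or_gt A B with h | h
  · have hB : 1/2 ≤ B := by linarith
    have h2 : (1 - q) * (1/2) ≤ (1 - q) * B :=
      mul_le_mul_of_nonneg_left hB (by linarith)
    nlinarith [mul_nonneg hq0.le h0a]
  · have hA : 1/2 ≤ A := by linarith
    have h2 : q * (1/2) ≤ q * A := mul_le_mul_of_nonneg_left hA hq0.le
    nlinarith [mul_nonneg (by linarith : (0:ℝ) ≤ 1 - q) h0b]

lemma mix_bounds {q A B : ℝ} (hq0 : 0 < q) (hq1 : q < 1) (h0a : 0 ≤ A) (h0b : 0 ≤ B)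
    (h1 : A + B = 1) :
    min q (1 - q) ≤ q * A + (1 - q) * B ∧ q * A + (1 - q) * B ≤ 1 := by
  constructor
  · rcases le_total q (1 - q) with h | h
    · rw [min_eq_left h]
      nlinarith [mul_nonneg (by linarith : (0:ℝ) ≤ 1 - q - q) h0b]
    · rw [min_eq_right h]
      nlinarith [mul_nonneg (by linarith : (0:ℝ) ≤ q - (1 - q)) h0a]
  · nlinarith [mul_nonneg hq0.le h0b, mul_nonneg (by linarith : (0:ℝ) ≤ 1 - q) h0a]

/-- Evaluation of `klDiv2 μ (s • μ + t • ν)` as an integral against a common reference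
measure `ξ`, assuming the densities of `μ` and `ν` w.r.t. `ξ` sum to `1` a.e. -/
lemma klDiv2_eval (μ ν ξ : Measure α)
    [IsFiniteMeasure μ] [IsFiniteMeasure ν] [IsFiniteMeasure ξ]
    (hμξ : μ ≪ ξ) (hνξ : ν ≪ ξ)
    (hsum : ∀ᵐ x ∂ξ, (μ.rnDeriv ξ x).toReal + (ν.rnDeriv ξ x).toReal = 1)
    {s t : ℝ} (hs : 0 < s) (ht : 0 < t) (hs1 : s ≤ 1) (ht1 : t ≤ 1) :
    klDiv2 μ (ENNReal.ofReal s • μ + ENNReal.ofReal t • ν)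
      = ((∫ x, (μ.rnDeriv ξ x).toReal *
          (Real.logb 2 ((μ.rnDeriv ξ x).toReal)
            - Real.logb 2 (s * (μ.rnDeriv ξ x).toReal + t * (ν.rnDeriv ξ x).toReal)) ∂ξ : ℝ)
          : EReal) := by
  set ρ : Measure α := ENNReal.ofReal s • μ + ENNReal.ofReal t • ν with hρ
  have hs0 : ENNReal.ofReal s ≠ 0 := by simp [ENNReal.ofReal_eq_zero, not_le, hs]
  haveI : IsFiniteMeasure (ENNReal.ofReal s • μ) :=
    ⟨by simpa using ENNReal.mul_lt_top ENNReal.ofReal_lt_top (measure_lt_top μ _)⟩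
  haveI : IsFiniteMeasure (ENNReal.ofReal t • ν) :=
    ⟨by simpa using ENNReal.mul_lt_top ENNReal.ofReal_lt_top (measure_lt_top ν _)⟩
  haveI hρfin : IsFiniteMeasure ρ := by
    constructor
    rw [hρ]
    simp only [Measure.coe_add, Pi.add_apply, Measure.smul_apply, smul_eq_mul]
    exact ENNReal.add_lt_top.mpr ⟨ENNReal.mul_lt_top ENNReal.ofReal_lt_top (measure_lt_top _ _),
      ENNReal.mul_lt_top ENNReal.ofReal_lt_top (measure_lt_top _ _)⟩
  have hμρ : μ ≪ ρ :=
    (Measure.absolutelyContinuous_smul hs0).trans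
      (Measure.absolutelyContinuous_of_le (Measure.le_add_right le_rfl))
  have hmul : μ.rnDeriv ρ * ρ.rnDeriv ξ =ᵐ[ξ] μ.rnDeriv ξ := Measure.rnDeriv_mul_rnDeriv hμρ
  have hM : ρ.rnDeriv ξ =ᵐ[ξ]
      fun x => ENNReal.ofReal s * μ.rnDeriv ξ x + ENNReal.ofReal t * ν.rnDeriv ξ x := by
    have h1 := Measure.rnDeriv_add' (ENNReal.ofReal s • μ) (ENNReal.ofReal t • ν) ξ
    have h2 := Measure.rnDeriv_smul_left_of_ne_top' μ ξ (r := ENNReal.ofReal s)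
      ENNReal.ofReal_ne_top
    have h3 := Measure.rnDeriv_smul_left_of_ne_top' ν ξ (r := ENNReal.ofReal t)
      ENNReal.ofReal_ne_top
    filter_upwards [h1, h2, h3] with x hx1 hx2 hx3
    show (ENNReal.ofReal s • μ + ENNReal.ofReal t • ν).rnDeriv ξ x = _
    rw [hx1, Pi.add_apply, hx2, hx3, Pi.smul_apply, Pi.smul_apply, smul_eq_mul, smul_eq_mul]
  have hGfin := Measure.rnDeriv_lt_top μ ξ
  have hHfin := Measure.rnDeriv_lt_top ν ξ
  -- a.e.[μ] identity for the log of the RN derivative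
  have hae : ∀ᵐ x ∂μ, Real.logb 2 ((μ.rnDeriv ρ x).toReal)
      = Real.logb 2 ((μ.rnDeriv ξ x).toReal)
        - Real.logb 2 (s * (μ.rnDeriv ξ x).toReal + t * (ν.rnDeriv ξ x).toReal) := by
    filter_upwards [hμξ.ae_le hmul, hμξ.ae_le hM, hμξ.ae_le hGfin, hμξ.ae_le hHfin,
      Measure.rnDeriv_pos hμξ] with x h1 h2 h3 h4 h5
    set G := μ.rnDeriv ξ x
    set H := ν.rnDeriv ξ x
    set M := ρ.rnDeriv ξ x
    have hM0 : M ≠ 0 := by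
      rw [h2]
      intro hc
      rcases add_eq_zero.mp hc with ⟨hc1, _⟩
      exact h5.ne' ((mul_eq_zero.mp hc1).resolve_left hs0)
    have hMtop : M ≠ ⊤ := by
      rw [h2]
      exact ENNReal.add_ne_top.mpr ⟨ENNReal.mul_ne_top ENNReal.ofReal_ne_top h3.ne,
        ENNReal.mul_ne_top ENNReal.ofReal_ne_top h4.ne⟩
    have hu : μ.rnDeriv ρ x = G / M :=
      (ENNReal.eq_div_iff hM0 hMtop).mpr (by rw [mul_comm]; exact h1)
    have hMreal : M.toReal = s * G.toReal + t * H.toReal := by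
      rw [h2, ENNReal.toReal_add (ENNReal.mul_ne_top ENNReal.ofReal_ne_top h3.ne)
        (ENNReal.mul_ne_top ENNReal.ofReal_ne_top h4.ne), ENNReal.toReal_mul,
        ENNReal.toReal_mul, ENNReal.toReal_ofReal hs.le, ENNReal.toReal_ofReal ht.le]
    have hGpos : 0 < G.toReal := ENNReal.toReal_pos h5.ne' h3.ne
    have hMpos : 0 < M.toReal := ENNReal.toReal_pos hM0 hMtop
    rw [hu, ENNReal.toReal_div, Real.logb_div hGpos.ne' hMpos.ne', hMreal]
  -- integrability
  have hm_meas : Measurable fun x =>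
      s * (μ.rnDeriv ξ x).toReal + t * (ν.rnDeriv ξ x).toReal :=
    ((Measure.measurable_rnDeriv μ ξ).ennreal_toReal.const_mul s).add
      ((Measure.measurable_rnDeriv ν ξ).ennreal_toReal.const_mul t)
  have hg_meas : Measurable fun x =>
      Real.logb 2 ((μ.rnDeriv ξ x).toReal)
        - Real.logb 2 (s * (μ.rnDeriv ξ x).toReal + t * (ν.rnDeriv ξ x).toReal) := by
    have l1 : Measurable fun x => Real.logb 2 ((μ.rnDeriv ξ x).toReal) := by
      simp only [Real.logb]
      exact (Real.measurable_log.comp (Measure.measurable_rnDeriv μ ξ).ennreal_toReal).div_const _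
    have l2 : Measurable fun x =>
        Real.logb 2 (s * (μ.rnDeriv ξ x).toReal + t * (ν.rnDeriv ξ x).toReal) := by
      simp only [Real.logb]
      exact (Real.measurable_log.comp hm_meas).div_const _
    exact l1.sub l2
  -- bound for the ξ-integrand
  have hbound : ∀ᵐ x ∂ξ, |(μ.rnDeriv ξ x).toReal *
      (Real.logb 2 ((μ.rnDeriv ξ x).toReal)
        - Real.logb 2 (s * (μ.rnDeriv ξ x).toReal + t * (ν.rnDeriv ξ x).toReal))|
      ≤ 2 + |Real.logb 2 (min s t)| := by
    filter_upwards [hsum] with x hx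
    set A := (μ.rnDeriv ξ x).toReal with hA
    set B := (ν.rnDeriv ξ x).toReal with hB
    have hA0 : 0 ≤ A := ENNReal.toReal_nonneg
    have hB0 : 0 ≤ B := ENNReal.toReal_nonneg
    have hA1 : A ≤ 1 := by linarith
    rcases eq_or_lt_of_le hA0 with h | h
    · simp [← h]; positivity
    · have hm1 : min s t ≤ s * A + t * B := by
        calc min s t = min s t * (A + B) := by rw [hx, mul_one]
        _ ≤ s * A + t * B := by
            rw [mul_add]
            exact add_le_add (mul_le_mul_of_nonneg_right (min_le_left _ _) hA0)
              (mul_le_mul_of_nonneg_right (min_le_right _ _) hB0)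
      have hm2 : s * A + t * B ≤ 1 := by nlinarith
      have habs : |Real.logb 2 (s * A + t * B)| ≤ |Real.logb 2 (min s t)| :=
        abs_logb_le_of_mem (lt_min hs ht) hm1 hm2
      calc |A * (Real.logb 2 A - Real.logb 2 (s * A + t * B))|
          ≤ |A * Real.logb 2 A| + |A * Real.logb 2 (s * A + t * B)| := by
            rw [mul_sub]; exact abs_sub _ _
        _ ≤ 2 + |Real.logb 2 (min s t)| := by
            refine add_le_add (abs_mul_logb_le hA0 hA1) ?_
            rw [abs_mul, abs_of_nonneg hA0]
            calc A * |Real.logb 2 (s * A + t * B)| ≤ 1 * |Real.logb 2 (min s t)| :=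
              mul_le_mul hA1 habs (abs_nonneg _) zero_le_one
            _ = |Real.logb 2 (min s t)| := one_mul _
  have hint_ξ : Integrable (fun x => (μ.rnDeriv ξ x).toReal *
      (Real.logb 2 ((μ.rnDeriv ξ x).toReal)
        - Real.logb 2 (s * (μ.rnDeriv ξ x).toReal + t * (ν.rnDeriv ξ x).toReal))) ξ :=
    integrable_of_bounded'
      (((Measure.measurable_rnDeriv μ ξ).ennreal_toReal.mul hg_meas).aestronglyMeasurable) hbound
  have hint_μ : Integrable (fun x =>
      Real.logb 2 ((μ.rnDeriv ξ x).toReal)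
        - Real.logb 2 (s * (μ.rnDeriv ξ x).toReal + t * (ν.rnDeriv ξ x).toReal)) μ := by
    have h := (integrable_withDensity_iff (Measure.measurable_rnDeriv μ ξ) hGfin
      (g := fun x => Real.logb 2 ((μ.rnDeriv ξ x).toReal)
        - Real.logb 2 (s * (μ.rnDeriv ξ x).toReal + t * (ν.rnDeriv ξ x).toReal))).mpr
      (hint_ξ.congr (Eventually.of_forall fun x => by ring))
    rwa [Measure.withDensity_rnDeriv_eq μ ξ hμξ] at h
  have hint_μ' : Integrable (fun x => Real.logb 2 ((μ.rnDeriv ρ x).toReal)) μ :=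
    hint_μ.congr (hae.mono fun x hx => hx.symm)
  rw [klDiv2, if_pos ⟨hμρ, hint_μ'⟩]
  congr 1
  rw [integral_congr_ae hae, ← integral_rnDeriv_smul hμξ]
  simp only [smul_eq_mul]

/-- Differentiation under the integral sign for `q ↦ ∫ w · log₂(q a + (1-q) b)`. -/
lemma hasDerivAt_logb_integral (ξ : Measure α) [IsFiniteMeasure ξ]
    {a b w : α → ℝ} (ha : Measurable a) (hb : Measurable b) (hw : Measurable w)
    (hgood : ∀ᵐ x ∂ξ, 0 ≤ a x ∧ 0 ≤ b x ∧ a x + b x = 1)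
    (hwb : ∀ᵐ x ∂ξ, |w x| ≤ 1)
    {p : ℝ} (hp0 : 0 < p) (hp1 : p < 1) :
    Integrable (fun x => w x * ((a x - b x) / ((p * a x + (1 - p) * b x) * Real.log 2))) ξ ∧
    HasDerivAt (fun q => ∫ x, w x * Real.logb 2 (q * a x + (1 - q) * b x) ∂ξ)
      (∫ x, w x * ((a x - b x) / ((p * a x + (1 - p) * b x) * Real.log 2)) ∂ξ) p := by
  have hl2 : (0:ℝ) < Real.log 2 := Real.log_pos one_lt_two
  set ε : ℝ := min p (1 - p) / 2 with hε
  have hε0 : 0 < ε := by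
    have : 0 < min p (1 - p) := lt_min hp0 (by linarith)
    positivity
  have hball : ∀ q ∈ Metric.ball p ε, ∀ x : α, 0 ≤ a x → 0 ≤ b x → a x + b x = 1 →
      ε ≤ q * a x + (1 - q) * b x ∧ q * a x + (1 - q) * b x ≤ 1 := by
    intro q hq x h0a h0b h1ab
    rw [Metric.mem_ball, Real.dist_eq, abs_lt] at hq
    have hm1 : min p (1 - p) ≤ p := min_le_left _ _
    have hm2 : min p (1 - p) ≤ 1 - p := min_le_right _ _
    have hq1 : ε ≤ q := by rw [hε] at *; linarith [hq.1]
    have hq2 : ε ≤ 1 - q := by rw [hε] at *; linarith [hq.2]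
    constructor
    · nlinarith [mul_le_mul_of_nonneg_right hq1 h0a, mul_le_mul_of_nonneg_right hq2 h0b]
    · nlinarith [mul_nonneg (le_trans hε0.le hq1) h0b, mul_nonneg (le_trans hε0.le hq2) h0a]
  have hmq_meas : ∀ q : ℝ, Measurable fun x => q * a x + (1 - q) * b x := fun q =>
    (ha.const_mul q).add (hb.const_mul (1 - q))
  have hF_meas : ∀ q : ℝ, AEStronglyMeasurable
      (fun x => w x * Real.logb 2 (q * a x + (1 - q) * b x)) ξ := by
    intro q
    refine (hw.mul ?_).aestronglyMeasurable
    simp only [Real.logb]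
    exact (Real.measurable_log.comp (hmq_meas q)).div_const _
  have hF'_meas : AEStronglyMeasurable
      (fun x => w x * ((a x - b x) / ((p * a x + (1 - p) * b x) * Real.log 2))) ξ :=
    (hw.mul ((ha.sub hb).div ((hmq_meas p).mul_const _))).aestronglyMeasurable
  have hpball : p ∈ Metric.ball p ε := Metric.mem_ball_self hε0
  have hF_int : Integrable (fun x => w x * Real.logb 2 (p * a x + (1 - p) * b x)) ξ := by
    refine Integrable.mono' (integrable_const |Real.logb 2 ε|) (hF_meas p) ?_
    filter_upwards [hgood, hwb] with x hx hwx
    obtain ⟨h0a, h0b, h1ab⟩ := hx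
    obtain ⟨hl, hu⟩ := hball p hpball x h0a h0b h1ab
    rw [Real.norm_eq_abs, abs_mul]
    calc |w x| * |Real.logb 2 (p * a x + (1 - p) * b x)|
        ≤ 1 * |Real.logb 2 ε| :=
          mul_le_mul hwx (abs_logb_le_of_mem hε0 hl hu) (abs_nonneg _) zero_le_one
      _ = |Real.logb 2 ε| := one_mul _
  have hmain := hasDerivAt_integral_of_dominated_loc_of_deriv_le (μ := ξ)
    (F := fun (q : ℝ) x => w x * Real.logb 2 (q * a x + (1 - q) * b x))
    (F' := fun (q : ℝ) x => w x * ((a x - b x) / ((q * a x + (1 - q) * b x) * Real.log 2)))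
    (bound := fun _ => 1 / (ε * Real.log 2)) (Metric.ball_mem_nhds p hε0)
    (Eventually.of_forall hF_meas) hF_int hF'_meas ?_ (integrable_const _) ?_
  · exact hmain
  · -- bound
    filter_upwards [hgood, hwb] with x hx hwx q hq
    obtain ⟨h0a, h0b, h1ab⟩ := hx
    obtain ⟨hl, hu⟩ := hball q hq x h0a h0b h1ab
    have hab1 : |a x - b x| ≤ 1 := by
      rw [abs_le]; constructor <;> nlinarith
    rw [Real.norm_eq_abs, abs_mul, abs_div,
      abs_of_pos (by nlinarith : (0:ℝ) < (q * a x + (1 - q) * b x) * Real.log 2)]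
    calc |w x| * (|a x - b x| / ((q * a x + (1 - q) * b x) * Real.log 2))
        ≤ 1 * (1 / (ε * Real.log 2)) := by
          refine mul_le_mul hwx ?_ (div_nonneg (abs_nonneg _) (by nlinarith)) zero_le_one
          exact div_le_div₀ zero_le_one hab1 (by positivity)
            (mul_le_mul_of_nonneg_right hl hl2.le)
      _ = 1 / (ε * Real.log 2) := one_mul _
  · -- differentiability
    filter_upwards [hgood] with x hx q hq
    obtain ⟨h0a, h0b, h1ab⟩ := hx
    obtain ⟨hl, _⟩ := hball q hq x h0a h0b h1ab
    have hm0 : (0:ℝ) < q * a x + (1 - q) * b x := lt_of_lt_of_le hε0 hl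
    have hu : HasDerivAt (fun q : ℝ => q * a x + (1 - q) * b x) (a x - b x) q := by
      have h := ((hasDerivAt_id q).mul_const (a x)).add
        (((hasDerivAt_const q (1:ℝ)).sub (hasDerivAt_id q)).mul_const (b x))
      exact h.congr_deriv (by ring)
    have hlog : HasDerivAt (fun q : ℝ => Real.log (q * a x + (1 - q) * b x))
        ((q * a x + (1 - q) * b x)⁻¹ * (a x - b x)) q :=
      by have := (Real.hasDerivAt_log hm0.ne').comp q hu; exact this
    have h2 : HasDerivAt (fun q : ℝ => w x * Real.logb 2 (q * a x + (1 - q) * b x))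
        (w x * ((q * a x + (1 - q) * b x)⁻¹ * (a x - b x) / Real.log 2)) q := by
      simp only [Real.logb]
      exact (hlog.div_const (Real.log 2)).const_mul (w x)
    exact h2.congr_deriv (by rw [div_mul_eq_div_div]; ring)

/-- The derivative of the function `G` appearing as the local expression of
`q ↦ (F_q).toReal`. -/
lemma deriv_G (ξ : Measure α) [IsFiniteMeasure ξ]
    {a b : α → ℝ} (ha : Measurable a) (hb : Measurable b)
    (hgood : ∀ᵐ x ∂ξ, 0 ≤ a x ∧ 0 ≤ b x ∧ a x + b x = 1)
    (hab_int : ∫ x, a x ∂ξ = ∫ x, b x ∂ξ)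
    {p : ℝ} (hp0 : 0 < p) (hp1 : p < 1) :
    HasDerivAt (fun q : ℝ =>
        ((∫ x, a x * Real.logb 2 (a x) ∂ξ) - ∫ x, a x * Real.logb 2 (q * a x + (1 - q) * b x) ∂ξ)
        + (1 - q) / q *
          ((∫ x, b x * Real.logb 2 (b x) ∂ξ)
            - ∫ x, b x * Real.logb 2 (q * a x + (1 - q) * b x) ∂ξ))
      (-((∫ x, b x * Real.logb 2 (b x) ∂ξ)
          - ∫ x, b x * Real.logb 2 (p * a x + (1 - p) * b x) ∂ξ) / p ^ 2) p := by
  have hwa : ∀ᵐ x ∂ξ, |a x| ≤ 1 := hgood.mono fun x ⟨h0, h0', h1⟩ => by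
    rw [abs_le]; constructor <;> linarith
  have hwb : ∀ᵐ x ∂ξ, |b x| ≤ 1 := hgood.mono fun x ⟨h0, h0', h1⟩ => by
    rw [abs_le]; constructor <;> linarith
  obtain ⟨hPint, hPder⟩ := hasDerivAt_logb_integral ξ ha hb ha hgood hwa hp0 hp1
  obtain ⟨hQint, hQder⟩ := hasDerivAt_logb_integral ξ ha hb hb hgood hwb hp0 hp1
  have hIa : Integrable a ξ := integrable_of_bounded' ha.aestronglyMeasurable hwa
  have hIb : Integrable b ξ := integrable_of_bounded' hb.aestronglyMeasurable hwb
  set P' : ℝ := ∫ x, a x * ((a x - b x) / ((p * a x + (1 - p) * b x) * Real.log 2)) ∂ξ with hP'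
  set Q' : ℝ := ∫ x, b x * ((a x - b x) / ((p * a x + (1 - p) * b x) * Real.log 2)) ∂ξ with hQ'
  have hkey : p * P' + (1 - p) * Q' = 0 := by
    rw [hP', hQ', ← integral_const_mul, ← integral_const_mul,
      ← integral_add (hPint.const_mul p) (hQint.const_mul (1 - p))]
    have hcong : ∀ᵐ x ∂ξ,
        p * (a x * ((a x - b x) / ((p * a x + (1 - p) * b x) * Real.log 2)))
          + (1 - p) * (b x * ((a x - b x) / ((p * a x + (1 - p) * b x) * Real.log 2)))
        = (a x - b x) / Real.log 2 := by
      filter_upwards [hgood] with x ⟨h0a, h0b, h1ab⟩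
      have hm : 0 < p * a x + (1 - p) * b x := mix_pos hp0 hp1 h0a h0b h1ab
      have hl2 : (0:ℝ) < Real.log 2 := Real.log_pos one_lt_two
      have hm' : p * a x + (1 - p) * b x ≠ 0 := hm.ne'
      calc _ = (p * a x + (1 - p) * b x) * (a x - b x)
            / ((p * a x + (1 - p) * b x) * Real.log 2) := by ring
        _ = _ := by rw [mul_div_mul_left _ _ hm']
    rw [integral_congr_ae hcong, integral_div, integral_sub hIa hIb, hab_int, sub_self,
      zero_div]
  have hc : HasDerivAt (fun q : ℝ => (1 - q) / q) (-1 / p ^ 2) p := by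
    have h1 : HasDerivAt (fun q : ℝ => 1 - q) (-1) p := by
      exact (hasDerivAt_id' p).const_sub 1
    have h2 := h1.div (hasDerivAt_id p) hp0.ne'
    have h3 : (-1 * id p - (1 - p) * 1) / id p ^ 2 = -1 / p ^ 2 := by
      simp only [id_eq]; ring
    exact h3 ▸ h2
  have hG := ((hasDerivAt_const p (∫ x, a x * Real.logb 2 (a x) ∂ξ)).sub hPder).add
    (hc.mul ((hasDerivAt_const p (∫ x, b x * Real.logb 2 (b x) ∂ξ)).sub hQder))
  refine hG.congr_deriv ?_
  simp only [Pi.sub_apply]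
  have h4 : P' + (1 - p) / p * Q' = 0 := by
    field_simp
    linear_combination hkey
  linear_combination -h4

end Aux

theorem stmt_3 (μK μN : Measure I01) [IsProbabilityMeasure μK] [IsProbabilityMeasure μN]
    (p : ℝ) (hp : p ∈ Set.Ioo (0 : ℝ) 1) :
    HasDerivAt (fun q : ℝ => (Fp q μK μN).toReal)
      (-(klDiv2 μN (mix p μK μN)).toReal / p ^ 2) p := by
  obtain ⟨hp0, hp1⟩ := hp
  have hμξ : μK ≪ μK + μN := Measure.absolutelyContinuous_of_le (Measure.le_add_right le_rfl)
  have hνξ : μN ≪ μK + μN := Measure.absolutelyContinuous_of_le (Measure.le_add_left le_rfl)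
  have hsum := den_sum μK μN
  have hsum' : ∀ᵐ x ∂(μK + μN),
      (μN.rnDeriv (μK + μN) x).toReal + (μK.rnDeriv (μK + μN) x).toReal = 1 :=
    hsum.mono fun x hx => by linarith
  have ha : Measurable fun x => (μK.rnDeriv (μK + μN) x).toReal :=
    (Measure.measurable_rnDeriv _ _).ennreal_toReal
  have hb : Measurable fun x => (μN.rnDeriv (μK + μN) x).toReal :=
    (Measure.measurable_rnDeriv _ _).ennreal_toReal
  have hgood : ∀ᵐ x ∂(μK + μN), 0 ≤ (μK.rnDeriv (μK + μN) x).toReal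
      ∧ 0 ≤ (μN.rnDeriv (μK + μN) x).toReal
      ∧ (μK.rnDeriv (μK + μN) x).toReal + (μN.rnDeriv (μK + μN) x).toReal = 1 :=
    hsum.mono fun x hx => ⟨ENNReal.toReal_nonneg, ENNReal.toReal_nonneg, hx⟩
  have hab_int : ∫ x, (μK.rnDeriv (μK + μN) x).toReal ∂(μK + μN)
      = ∫ x, (μN.rnDeriv (μK + μN) x).toReal ∂(μK + μN) := by
    rw [Measure.integral_toReal_rnDeriv hμξ, Measure.integral_toReal_rnDeriv hνξ]
    simp
  -- measurability of log densities
  have hla : Measurable fun x => Real.logb 2 ((μK.rnDeriv (μK + μN) x).toReal) := by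
    simp only [Real.logb]; exact (Real.measurable_log.comp ha).div_const _
  have hlb : Measurable fun x => Real.logb 2 ((μN.rnDeriv (μK + μN) x).toReal) := by
    simp only [Real.logb]; exact (Real.measurable_log.comp hb).div_const _
  have hlm : ∀ q : ℝ, Measurable fun x => Real.logb 2
      (q * (μK.rnDeriv (μK + μN) x).toReal + (1 - q) * (μN.rnDeriv (μK + μN) x).toReal) := by
    intro q
    simp only [Real.logb]
    exact (Real.measurable_log.comp ((ha.const_mul q).add (hb.const_mul (1 - q)))).div_const _
  -- integrability of the pieces
  have hIA : Integrable (fun x => (μK.rnDeriv (μK + μN) x).toReal *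
      Real.logb 2 ((μK.rnDeriv (μK + μN) x).toReal)) (μK + μN) := by
    refine integrable_of_bounded' (ha.mul hla).aestronglyMeasurable
      (C := 2) (hgood.mono fun x ⟨h0a, h0b, h1⟩ => abs_mul_logb_le h0a (by linarith))
  have hIB : Integrable (fun x => (μN.rnDeriv (μK + μN) x).toReal *
      Real.logb 2 ((μN.rnDeriv (μK + μN) x).toReal)) (μK + μN) := by
    refine integrable_of_bounded' (hb.mul hlb).aestronglyMeasurable
      (C := 2) (hgood.mono fun x ⟨h0a, h0b, h1⟩ => abs_mul_logb_le h0b (by linarith))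
  have hIMa : ∀ q ∈ Set.Ioo (0:ℝ) 1, Integrable (fun x => (μK.rnDeriv (μK + μN) x).toReal *
      Real.logb 2 (q * (μK.rnDeriv (μK + μN) x).toReal
        + (1 - q) * (μN.rnDeriv (μK + μN) x).toReal)) (μK + μN) := by
    intro q hq
    refine integrable_of_bounded' (ha.mul (hlm q)).aestronglyMeasurable
      (C := |Real.logb 2 (min q (1 - q))|) (hgood.mono fun x ⟨h0a, h0b, h1⟩ => ?_)
    obtain ⟨hl, hu⟩ := mix_bounds hq.1 hq.2 h0a h0b h1
    rw [abs_mul]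
    calc _ ≤ 1 * |Real.logb 2 (min q (1 - q))| := by
          refine mul_le_mul (by rw [abs_of_nonneg h0a]; linarith)
            (abs_logb_le_of_mem (lt_min hq.1 (by linarith [hq.2])) hl hu)
            (abs_nonneg _) zero_le_one
      _ = _ := one_mul _
  have hIMb : ∀ q ∈ Set.Ioo (0:ℝ) 1, Integrable (fun x => (μN.rnDeriv (μK + μN) x).toReal *
      Real.logb 2 (q * (μK.rnDeriv (μK + μN) x).toReal
        + (1 - q) * (μN.rnDeriv (μK + μN) x).toReal)) (μK + μN) := by
    intro q hq
    refine integrable_of_bounded' (hb.mul (hlm q)).aestronglyMeasurable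
      (C := |Real.logb 2 (min q (1 - q))|) (hgood.mono fun x ⟨h0a, h0b, h1⟩ => ?_)
    obtain ⟨hl, hu⟩ := mix_bounds hq.1 hq.2 h0a h0b h1
    rw [abs_mul]
    calc _ ≤ 1 * |Real.logb 2 (min q (1 - q))| := by
          refine mul_le_mul (by rw [abs_of_nonneg h0b]; linarith)
            (abs_logb_le_of_mem (lt_min hq.1 (by linarith [hq.2])) hl hu)
            (abs_nonneg _) zero_le_one
      _ = _ := one_mul _
  -- evaluation of the two KL divergences for q ∈ (0,1)
  have hKeval : ∀ q ∈ Set.Ioo (0:ℝ) 1, klDiv2 μK (mix q μK μN)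
      = (((∫ x, (μK.rnDeriv (μK + μN) x).toReal *
            Real.logb 2 ((μK.rnDeriv (μK + μN) x).toReal) ∂(μK + μN))
          - ∫ x, (μK.rnDeriv (μK + μN) x).toReal *
            Real.logb 2 (q * (μK.rnDeriv (μK + μN) x).toReal
              + (1 - q) * (μN.rnDeriv (μK + μN) x).toReal) ∂(μK + μN) : ℝ) : EReal) := by
    intro q hq
    have h := klDiv2_eval μK μN (μK + μN) hμξ hνξ hsum hq.1
      (by linarith [hq.2] : (0:ℝ) < 1 - q) hq.2.le (by linarith [hq.1])
    have hmix : mix q μK μN = ENNReal.ofReal q • μK + ENNReal.ofReal (1 - q) • μN := rfl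
    rw [hmix, h]
    congr 1
    simp only [mul_sub]
    exact integral_sub hIA (hIMa q hq)
  have hNeval : ∀ q ∈ Set.Ioo (0:ℝ) 1, klDiv2 μN (mix q μK μN)
      = (((∫ x, (μN.rnDeriv (μK + μN) x).toReal *
            Real.logb 2 ((μN.rnDeriv (μK + μN) x).toReal) ∂(μK + μN))
          - ∫ x, (μN.rnDeriv (μK + μN) x).toReal *
            Real.logb 2 (q * (μK.rnDeriv (μK + μN) x).toReal
              + (1 - q) * (μN.rnDeriv (μK + μN) x).toReal) ∂(μK + μN) : ℝ) : EReal) := by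
    intro q hq
    have h := klDiv2_eval μN μK (μK + μN) hνξ hμξ hsum'
      (by linarith [hq.2] : (0:ℝ) < 1 - q) hq.1 (by linarith [hq.1]) hq.2.le
    have hmix : mix q μK μN = ENNReal.ofReal (1 - q) • μN + ENNReal.ofReal q • μK :=
      add_comm _ _
    rw [hmix, h]
    congr 1
    have heq : (fun x => (μN.rnDeriv (μK + μN) x).toReal *
        (Real.logb 2 ((μN.rnDeriv (μK + μN) x).toReal)
          - Real.logb 2 ((1 - q) * (μN.rnDeriv (μK + μN) x).toReal
            + q * (μK.rnDeriv (μK + μN) x).toReal)))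
        = fun x => (μN.rnDeriv (μK + μN) x).toReal *
            Real.logb 2 ((μN.rnDeriv (μK + μN) x).toReal)
          - (μN.rnDeriv (μK + μN) x).toReal *
            Real.logb 2 (q * (μK.rnDeriv (μK + μN) x).toReal
              + (1 - q) * (μN.rnDeriv (μK + μN) x).toReal) := by
      funext x
      rw [show (1 - q) * (μN.rnDeriv (μK + μN) x).toReal
          + q * (μK.rnDeriv (μK + μN) x).toReal
          = q * (μK.rnDeriv (μK + μN) x).toReal
            + (1 - q) * (μN.rnDeriv (μK + μN) x).toReal from by ring]
      ring
    rw [heq]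
    exact integral_sub hIB (hIMb q hq)
  -- the local expression of q ↦ (Fp q μK μN).toReal
  have heval : ∀ q ∈ Set.Ioo (0:ℝ) 1, (Fp q μK μN).toReal
      = ((∫ x, (μK.rnDeriv (μK + μN) x).toReal *
            Real.logb 2 ((μK.rnDeriv (μK + μN) x).toReal) ∂(μK + μN))
          - ∫ x, (μK.rnDeriv (μK + μN) x).toReal *
            Real.logb 2 (q * (μK.rnDeriv (μK + μN) x).toReal
              + (1 - q) * (μN.rnDeriv (μK + μN) x).toReal) ∂(μK + μN))
        + (1 - q) / q *
          ((∫ x, (μN.rnDeriv (μK + μN) x).toReal *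
            Real.logb 2 ((μN.rnDeriv (μK + μN) x).toReal) ∂(μK + μN))
          - ∫ x, (μN.rnDeriv (μK + μN) x).toReal *
            Real.logb 2 (q * (μK.rnDeriv (μK + μN) x).toReal
              + (1 - q) * (μN.rnDeriv (μK + μN) x).toReal) ∂(μK + μN)) := by
    intro q hq
    rw [Fp, if_neg hq.1.ne', hKeval q hq, hNeval q hq, ← EReal.coe_mul, ← EReal.coe_add,
      EReal.toReal_coe]
  have hder := deriv_G (μK + μN) ha hb hgood hab_int hp0 hp1
  have hNp := hNeval p ⟨hp0, hp1⟩
  have hNp' : (klDiv2 μN (mix p μK μN)).toReal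
      = (∫ x, (μN.rnDeriv (μK + μN) x).toReal *
          Real.logb 2 ((μN.rnDeriv (μK + μN) x).toReal) ∂(μK + μN))
        - ∫ x, (μN.rnDeriv (μK + μN) x).toReal *
          Real.logb 2 (p * (μK.rnDeriv (μK + μN) x).toReal
            + (1 - p) * (μN.rnDeriv (μK + μN) x).toReal) ∂(μK + μN) := by
    rw [hNp, EReal.toReal_coe]
  rw [hNp']
  exact hder.congr_of_eventuallyEq
    (Filter.eventuallyEq_of_mem (Ioo_mem_nhds hp0 hp1) fun q hq => heval q hq)
end

section
/- Fix μK, μN ∈ P([0,1]) and define I(p) := p·KL(μK ‖ μ_p) + (1−p)·KL(μN ‖ μ_p) for p ∈ (0,1), where μ_p = p·μK + (1−p)·μN. Then I is differentiable on (0,1) with I′(p) = KL(μK ‖ μ_p) − KL(μN ‖ μ_p). -/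
/- STATEMENT 4: I(p) := p·KL(μK ‖ μ_p) + (1−p)·KL(μN ‖ μ_p) is differentiable on (0,1)
   with I′(p) = KL(μK ‖ μ_p) − KL(μN ‖ μ_p).  (For p ∈ (0,1) both μK and μN are absolutely
   continuous w.r.t. μ_p, with bounded densities, so both KL terms are finite and we work
   with the real values of the base-2 KL divergence.) -/

open MeasureTheory Filter Topology
open scoped ENNReal

/-- `I(p) = p·KL(μK ‖ μ_p) + (1−p)·KL(μN ‖ μ_p)` (real-valued, base-2 KL). -/
noncomputable def mutualInfoFun {α : Type*} [MeasurableSpace α]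
    (μK μN : Measure α) (p : ℝ) : ℝ :=
  p * (klDiv2 μK (mix p μK μN)).toReal + (1 - p) * (klDiv2 μN (mix p μK μN)).toReal


-- Auxiliary lemmas

lemma log_two_pos' : (0:ℝ) < Real.log 2 := Real.log_pos one_lt_two

lemma abs_mul_logb_le_s4 {c a m : ℝ} (hc : 0 < c) (ha0 : 0 ≤ a) (ha1 : a ≤ 1)
    (hcm : c ≤ m) (hm1 : m ≤ 1) :
    |a * Real.logb 2 (a / m)| ≤ (1 + |Real.log c|) / Real.log 2 := by
  have hm0 : 0 < m := hc.trans_le hcm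
  have hRHS : (0:ℝ) ≤ (1 + |Real.log c|) / Real.log 2 := by positivity
  rcases eq_or_lt_of_le ha0 with h0 | ha
  · simp [← h0, hRHS]
  · have hlogm_le : |Real.log m| ≤ |Real.log c| := by
      have h1 : Real.log m ≤ 0 := Real.log_nonpos hm0.le hm1
      have h2 : Real.log c ≤ Real.log m := Real.log_le_log hc hcm
      rw [abs_of_nonpos h1, abs_of_nonpos (h2.trans h1)]
      linarith
    have key : a * Real.logb 2 (a / m) = (a * Real.log a - a * Real.log m) / Real.log 2 := by
      rw [Real.logb, Real.log_div (ne_of_gt ha) (ne_of_gt hm0)]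
      ring
    rw [key, abs_div, abs_of_pos log_two_pos']
    gcongr
    calc |a * Real.log a - a * Real.log m| ≤ |a * Real.log a| + |a * Real.log m| := abs_sub _ _
      _ ≤ 1 + |Real.log c| := by
          have h1 : |a * Real.log a| ≤ 1 := by
            have := Real.abs_log_mul_self_lt a ha ha1
            rw [mul_comm] at this
            exact this.le
          have h2 : |a * Real.log m| ≤ |Real.log c| := by
            rw [abs_mul, abs_of_nonneg ha0]
            calc a * |Real.log m| ≤ 1 * |Real.log c| := by
                  apply mul_le_mul ha1 hlogm_le (abs_nonneg _) zero_le_one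
              _ = |Real.log c| := one_mul _
          linarith




lemma term_hasDerivAt {a b : ℝ} (ha : 0 ≤ a) (hb : 0 ≤ b) {t : ℝ} (ht0 : 0 < t) (ht1 : t < 1) :
    HasDerivAt (fun s => s * (a * Real.logb 2 (a / (s * a + (1 - s) * b))))
      (a * Real.logb 2 (a / (t * a + (1 - t) * b))
        - t * a * (a - b) / ((t * a + (1 - t) * b) * Real.log 2)) t := by
  rcases eq_or_lt_of_le ha with h0 | hapos
  · simp only [← h0, zero_mul, mul_zero, zero_div, sub_zero, Real.logb_zero]
    exact hasDerivAt_const t 0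
  · set m : ℝ → ℝ := fun s => s * a + (1 - s) * b with hm_def
    have hmt : 0 < m t := by
      have h1 : 0 < t * a := mul_pos ht0 hapos
      have h2 : 0 ≤ (1 - t) * b := mul_nonneg (by linarith) hb
      simp only [hm_def]; linarith
    have hm : HasDerivAt m (a - b) t := by
      have h1 : HasDerivAt (fun s : ℝ => s * a) (1 * a) t := (hasDerivAt_id t).mul_const a
      have h2 : HasDerivAt (fun s : ℝ => (1 - s) * b) ((0 - 1) * b) t :=
        ((hasDerivAt_const t (1:ℝ)).sub (hasDerivAt_id t)).mul_const b
      have := h1.add h2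
      refine this.congr_deriv ?_
      ring
    have hmev : ∀ᶠ s in 𝓝 t, 0 < m s := hm.continuousAt.eventually (eventually_gt_nhds hmt)
    have hlogm : HasDerivAt (fun s => Real.log (m s)) ((m t)⁻¹ * (a - b)) t :=
      (Real.hasDerivAt_log hmt.ne').comp t hm
    have hG : HasDerivAt (fun s => s * (a * ((Real.log a - Real.log (m s)) / Real.log 2)))
        (1 * (a * ((Real.log a - Real.log (m t)) / Real.log 2))
          + t * (a * ((0 - (m t)⁻¹ * (a - b)) / Real.log 2))) t := by
      exact (hasDerivAt_id t).mul
        ((((hasDerivAt_const t (Real.log a)).sub hlogm).div_const (Real.log 2)).const_mul a)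
    have heq : (fun s => s * (a * Real.logb 2 (a / m s)))
        =ᶠ[𝓝 t] (fun s => s * (a * ((Real.log a - Real.log (m s)) / Real.log 2))) := by
      filter_upwards [hmev] with s hs
      rw [Real.logb, Real.log_div hapos.ne' hs.ne']
    have hfinal := hG.congr_of_eventuallyEq heq
    refine hfinal.congr_deriv ?_
    rw [Real.logb, Real.log_div hapos.ne' hmt.ne']
    simp only [hm_def] at hmt ⊢
    have hmt' : t * a + (1 - t) * b ≠ 0 := hmt.ne'
    field_simp
    ring




lemma F_hasDerivAt {a b : ℝ} (ha : 0 ≤ a) (hb : 0 ≤ b) {t : ℝ} (ht0 : 0 < t) (ht1 : t < 1) :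
    HasDerivAt (fun s => s * (a * Real.logb 2 (a / (s * a + (1 - s) * b)))
        + (1 - s) * (b * Real.logb 2 (b / (s * a + (1 - s) * b))))
      (a * Real.logb 2 (a / (t * a + (1 - t) * b))
        - b * Real.logb 2 (b / (t * a + (1 - t) * b)) - (a - b) / Real.log 2) t := by
  by_cases hab : a = 0 ∧ b = 0
  · obtain ⟨h1, h2⟩ := hab
    simp only [h1, h2, zero_mul, mul_zero, zero_div, Real.logb_zero, add_zero, sub_zero, zero_sub,
      neg_zero]
    simpa using hasDerivAt_const t 0
  · have hmt : 0 < t * a + (1 - t) * b := by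
      rcases (not_and_or.mp hab) with h | h
      · have hapos : 0 < a := lt_of_le_of_ne ha (Ne.symm h)
        have h2 : 0 ≤ (1 - t) * b := mul_nonneg (by linarith) hb
        nlinarith
      · have hbpos : 0 < b := lt_of_le_of_ne hb (Ne.symm h)
        have h2 : 0 ≤ t * a := mul_nonneg ht0.le ha
        nlinarith
    have h1 := term_hasDerivAt ha hb ht0 ht1
    -- second term via composition with s ↦ 1 - s
    have h2' := term_hasDerivAt hb ha (t := 1 - t) (by linarith) (by linarith)
    have hι : HasDerivAt (fun s : ℝ => 1 - s) (-1) t := by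
      exact (hasDerivAt_id' t).const_sub 1
    have h2 := h2'.comp t hι
    have hfun : ((fun u => u * (b * Real.logb 2 (b / (u * b + (1 - u) * a)))) ∘ fun s => 1 - s)
        = fun s => (1 - s) * (b * Real.logb 2 (b / (s * a + (1 - s) * b))) := by
      funext s
      simp only [Function.comp_apply]
      ring_nf
    rw [hfun] at h2
    have hsum := h1.add h2
    refine hsum.congr_deriv ?_
    have e1 : (1 : ℝ) - (1 - t) = t := by ring
    rw [e1, add_comm ((1-t) * b) (t * a)]
    have hmt' : t * a + (1 - t) * b ≠ 0 := hmt.ne'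
    field_simp
    have hD : (a * t - t * b + b) * (a * t - t * b + b)⁻¹ = 1 :=
      mul_inv_cancel₀ (by intro h; apply hmt'; linarith)
    linear_combination (b - a) * hD

lemma measurable_logb_comp {β : Type*} [MeasurableSpace β] {f : β → ℝ} (hf : Measurable f) :
    Measurable fun x => Real.logb 2 (f x) := by
  simp only [Real.logb]
  exact (Real.measurable_log.comp hf).div_const _


section Repr
variable {α : Type*} [MeasurableSpace α]

lemma ac_add_right (μ μ' : Measure α) : μ ≪ μ + μ' := by
  refine Measure.AbsolutelyContinuous.mk fun s hs h0 => ?_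
  simp only [Measure.coe_add, Pi.add_apply, add_eq_zero] at h0
  exact h0.1

lemma sum_rnDeriv_ae (μ μ' : Measure α) [IsFiniteMeasure μ] [IsFiniteMeasure μ'] :
    (fun x => μ.rnDeriv (μ + μ') x + μ'.rnDeriv (μ + μ') x) =ᵐ[μ + μ'] fun _ => 1 := by
  filter_upwards [Measure.rnDeriv_add μ μ' (μ + μ'), Measure.rnDeriv_self (μ + μ')] with x hx hx'
  simpa [Pi.add_apply] using hx.symm.trans hx'

lemma kl_repr (μ μ' : Measure α) [IsProbabilityMeasure μ] [IsProbabilityMeasure μ'] {t : ℝ}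
    (ht0 : 0 < t) (ht1 : t < 1) :
    klDiv2 μ (mix t μ μ') =
      ((∫ x, (μ.rnDeriv (μ + μ') x).toReal *
          Real.logb 2 ((μ.rnDeriv (μ + μ') x).toReal /
            (t * (μ.rnDeriv (μ + μ') x).toReal + (1 - t) * (μ'.rnDeriv (μ + μ') x).toReal))
          ∂(μ + μ') : ℝ) : EReal)
    ∧ Integrable (fun x => (μ.rnDeriv (μ + μ') x).toReal *
          Real.logb 2 ((μ.rnDeriv (μ + μ') x).toReal /
            (t * (μ.rnDeriv (μ + μ') x).toReal + (1 - t) * (μ'.rnDeriv (μ + μ') x).toReal)))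
        (μ + μ') := by
  set ν : Measure α := μ + μ' with hν_def
  set fE : α → ℝ≥0∞ := μ.rnDeriv ν with hfE_def
  set gE : α → ℝ≥0∞ := μ'.rnDeriv ν with hgE_def
  have hf_meas : Measurable fE := Measure.measurable_rnDeriv _ _
  have hg_meas : Measurable gE := Measure.measurable_rnDeriv _ _
  have hμν : μ ≪ ν := ac_add_right μ μ'
  have hμ'ν : μ' ≪ ν := by rw [hν_def, add_comm]; exact ac_add_right μ' μ
  have hsum : (fun x => fE x + gE x) =ᵐ[ν] fun _ => 1 := sum_rnDeriv_ae μ μ'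
  set mE : α → ℝ≥0∞ := fun x => ENNReal.ofReal t * fE x + ENNReal.ofReal (1 - t) * gE x
    with hmE_def
  have hmE_meas : Measurable mE := (hf_meas.const_mul _).add (hg_meas.const_mul _)
  have hf_lt_top : ∀ᵐ x ∂ν, fE x < ∞ := Measure.rnDeriv_lt_top _ _
  have hg_lt_top : ∀ᵐ x ∂ν, gE x < ∞ := Measure.rnDeriv_lt_top _ _
  have h_ne_top : ∀ᵐ x ∂ν, mE x ≠ ∞ := by
    filter_upwards [hf_lt_top, hg_lt_top] with x hf hg
    simp only [hmE_def, ne_eq, ENNReal.add_eq_top, not_or]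
    constructor <;> exact ENNReal.mul_ne_top ENNReal.ofReal_ne_top (by simp [hf.ne, hg.ne])
  have h_ne_zero : ∀ᵐ x ∂ν, mE x ≠ 0 := by
    filter_upwards [hsum] with x hx
    intro h
    simp only [hmE_def, add_eq_zero, mul_eq_zero] at h
    have ht0' : ENNReal.ofReal t ≠ 0 := by simp [ENNReal.ofReal_eq_zero, not_le, ht0]
    have ht1' : ENNReal.ofReal (1 - t) ≠ 0 := by
      simp only [ne_eq, ENNReal.ofReal_eq_zero, not_le]; linarith
    have h1 : fE x = 0 := h.1.resolve_left ht0'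
    have h2 : gE x = 0 := h.2.resolve_left ht1'
    rw [h1, h2] at hx
    simp at hx
  have hmix : mix t μ μ' = ν.withDensity mE := by
    have e1 : ν.withDensity (fun x => ENNReal.ofReal t * fE x) = ENNReal.ofReal t • μ := by
      rw [show (fun x => ENNReal.ofReal t * fE x) = ENNReal.ofReal t • fE from rfl,
        withDensity_smul _ hf_meas, Measure.withDensity_rnDeriv_eq μ ν hμν]
    have e2 : ν.withDensity (fun x => ENNReal.ofReal (1 - t) * gE x)
        = ENNReal.ofReal (1 - t) • μ' := by
      rw [show (fun x => ENNReal.ofReal (1 - t) * gE x) = ENNReal.ofReal (1 - t) • gE from rfl,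
        withDensity_smul _ hg_meas, Measure.withDensity_rnDeriv_eq μ' ν hμ'ν]
    rw [mix]
    rw [show ν.withDensity mE = ν.withDensity ((fun x => ENNReal.ofReal t * fE x)
        + fun x => ENNReal.ofReal (1 - t) * gE x) from rfl]
    rw [withDensity_add_left (hf_meas.const_mul _), e1, e2]
  have hrn : μ.rnDeriv (mix t μ μ') =ᵐ[ν] fun x => (mE x)⁻¹ * fE x := by
    rw [hmix]
    exact Measure.rnDeriv_withDensity_right μ ν hmE_meas.aemeasurable h_ne_zero h_ne_top
  have hν_ac_mix : ν ≪ mix t μ μ' := by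
    rw [hmix]; exact withDensity_absolutelyContinuous' hmE_meas.aemeasurable h_ne_zero
  have hμ_ac : μ ≪ mix t μ μ' := hμν.trans hν_ac_mix
  -- pointwise identity
  have hpt : (fun x => Real.logb 2 ((μ.rnDeriv (mix t μ μ') x).toReal)) =ᵐ[ν]
      (fun x => Real.logb 2 ((fE x).toReal /
        (t * (fE x).toReal + (1 - t) * (gE x).toReal))) := by
    filter_upwards [hrn, hf_lt_top, hg_lt_top] with x hx hfx hgx
    rw [hx, ENNReal.toReal_mul, ENNReal.toReal_inv]
    congr 1
    rw [inv_mul_eq_div]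
    congr 1
    rw [hmE_def]
    rw [ENNReal.toReal_add (ENNReal.mul_ne_top ENNReal.ofReal_ne_top hfx.ne)
      (ENNReal.mul_ne_top ENNReal.ofReal_ne_top hgx.ne), ENNReal.toReal_mul, ENNReal.toReal_mul,
      ENNReal.toReal_ofReal ht0.le, ENNReal.toReal_ofReal (by linarith)]
  -- integrability over ν
  have hbnd : ∀ᵐ x ∂ν, 0 ≤ (fE x).toReal ∧ (fE x).toReal ≤ 1
      ∧ (fE x).toReal + (gE x).toReal = 1 := by
    filter_upwards [hsum, hf_lt_top, hg_lt_top] with x hx hfx hgx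
    have h1 : (fE x).toReal + (gE x).toReal = 1 := by
      rw [← ENNReal.toReal_add hfx.ne hgx.ne, hx]
      simp
    refine ⟨ENNReal.toReal_nonneg, ?_, h1⟩
    have := ENNReal.toReal_nonneg (a := gE x)
    linarith
  set c : ℝ := min t (1 - t) with hc_def
  have hc_pos : 0 < c := lt_min ht0 (by linarith)
  have hmeas_int : AEStronglyMeasurable (fun x => (fE x).toReal *
      Real.logb 2 ((fE x).toReal / (t * (fE x).toReal + (1 - t) * (gE x).toReal))) ν := by
    apply Measurable.aestronglyMeasurable
    apply (hf_meas.ennreal_toReal).mul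
    exact (measurable_logb_comp ((hf_meas.ennreal_toReal).div
      (((hf_meas.ennreal_toReal).const_mul t).add ((hg_meas.ennreal_toReal).const_mul (1-t)))))
  have hIb : Integrable (fun x => (fE x).toReal *
      Real.logb 2 ((fE x).toReal / (t * (fE x).toReal + (1 - t) * (gE x).toReal))) ν := by
    refine Integrable.mono' (integrable_const ((1 + |Real.log c|) / Real.log 2)) hmeas_int ?_
    filter_upwards [hbnd] with x hx
    obtain ⟨h0, h1, hsum1⟩ := hx
    rw [Real.norm_eq_abs]
    have hb0 : 0 ≤ (gE x).toReal := ENNReal.toReal_nonneg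
    have hm_lb : c ≤ t * (fE x).toReal + (1 - t) * (gE x).toReal := by
      have e1 : c * (fE x).toReal ≤ t * (fE x).toReal :=
        mul_le_mul_of_nonneg_right (min_le_left _ _) h0
      have e2 : c * (gE x).toReal ≤ (1 - t) * (gE x).toReal :=
        mul_le_mul_of_nonneg_right (min_le_right _ _) hb0
      nlinarith
    have hm_ub : t * (fE x).toReal + (1 - t) * (gE x).toReal ≤ 1 := by nlinarith
    exact abs_mul_logb_le_s4 hc_pos h0 h1 hm_lb hm_ub
  have hInt : Integrable (fun x => Real.logb 2 ((μ.rnDeriv (mix t μ μ') x).toReal)) μ := by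
    have h1 : Integrable (fun x => Real.logb 2 ((fE x).toReal /
        (t * (fE x).toReal + (1 - t) * (gE x).toReal))) μ := by
      refine (integrable_rnDeriv_smul_iff hμν).mp ?_
      simpa [smul_eq_mul] using hIb
    exact h1.congr (hμν.ae_eq hpt).symm
  refine ⟨?_, hIb⟩
  rw [klDiv2, if_pos ⟨hμ_ac, hInt⟩]
  congr 1
  calc ∫ x, Real.logb 2 ((μ.rnDeriv (mix t μ μ') x).toReal) ∂μ
      = ∫ x, Real.logb 2 ((fE x).toReal /
          (t * (fE x).toReal + (1 - t) * (gE x).toReal)) ∂μ :=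
        integral_congr_ae (hμν.ae_eq hpt)
    _ = ∫ x, (μ.rnDeriv ν x).toReal • Real.logb 2 ((fE x).toReal /
          (t * (fE x).toReal + (1 - t) * (gE x).toReal)) ∂ν :=
        (integral_rnDeriv_smul hμν).symm
    _ = _ := by simp [smul_eq_mul, hfE_def]
end Repr


theorem stmt_4 (μK μN : Measure I01) [IsProbabilityMeasure μK] [IsProbabilityMeasure μN]
    (p : ℝ) (hp : p ∈ Set.Ioo (0 : ℝ) 1) :
    HasDerivAt (mutualInfoFun μK μN)
      ((klDiv2 μK (mix p μK μN)).toReal - (klDiv2 μN (mix p μK μN)).toReal) p := by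
  obtain ⟨hp0, hp1⟩ := hp
  set ν : Measure I01 := μK + μN with hν_def
  set f : I01 → ℝ := fun x => (μK.rnDeriv ν x).toReal with hf_def
  set g : I01 → ℝ := fun x => (μN.rnDeriv ν x).toReal with hg_def
  have hmeasf : Measurable f := (Measure.measurable_rnDeriv _ _).ennreal_toReal
  have hmeasg : Measurable g := (Measure.measurable_rnDeriv _ _).ennreal_toReal
  set F : ℝ → I01 → ℝ := fun t x =>
    t * (f x * Real.logb 2 (f x / (t * f x + (1 - t) * g x)))
    + (1 - t) * (g x * Real.logb 2 (g x / (t * f x + (1 - t) * g x))) with hF_def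
  set F' : ℝ → I01 → ℝ := fun t x =>
    f x * Real.logb 2 (f x / (t * f x + (1 - t) * g x))
    - g x * Real.logb 2 (g x / (t * f x + (1 - t) * g x))
    - (f x - g x) / Real.log 2 with hF'_def
  -- KL representations
  have klK : ∀ {t : ℝ}, 0 < t → t < 1 →
      klDiv2 μK (mix t μK μN)
        = ((∫ x, f x * Real.logb 2 (f x / (t * f x + (1 - t) * g x)) ∂ν : ℝ) : EReal)
      ∧ Integrable (fun x => f x * Real.logb 2 (f x / (t * f x + (1 - t) * g x))) ν := by
    intro t ht0 ht1
    exact kl_repr μK μN ht0 ht1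
  have hmix_comm : ∀ t : ℝ, mix t μK μN = mix (1 - t) μN μK := by
    intro t
    simp only [mix, sub_sub_cancel]
    exact add_comm _ _
  have klN : ∀ {t : ℝ}, 0 < t → t < 1 →
      klDiv2 μN (mix t μK μN)
        = ((∫ x, g x * Real.logb 2 (g x / (t * f x + (1 - t) * g x)) ∂ν : ℝ) : EReal)
      ∧ Integrable (fun x => g x * Real.logb 2 (g x / (t * f x + (1 - t) * g x))) ν := by
    intro t ht0 ht1
    have h := kl_repr μN μK (t := 1 - t) (by linarith) (by linarith)
    rw [add_comm μN μK, ← hmix_comm t] at h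
    have hfun_eq : (fun x => (μN.rnDeriv (μK + μN) x).toReal *
        Real.logb 2 ((μN.rnDeriv (μK + μN) x).toReal /
          ((1 - t) * (μN.rnDeriv (μK + μN) x).toReal
            + (1 - (1 - t)) * (μK.rnDeriv (μK + μN) x).toReal)))
        = (fun x => g x * Real.logb 2 (g x / (t * f x + (1 - t) * g x))) := by
      funext x
      have e1 : (1 : ℝ) - (1 - t) = t := by ring
      have e2 : (1 - t) * (μN.rnDeriv (μK + μN) x).toReal
          + t * (μK.rnDeriv (μK + μN) x).toReal = t * f x + (1 - t) * g x := by
        simp only [hf_def, hg_def, hν_def]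
        ring
      rw [e1, e2]
    rw [hfun_eq] at h
    exact h
  -- a.e. bounds
  have hf_lt_top : ∀ᵐ x ∂ν, μK.rnDeriv ν x < ∞ := Measure.rnDeriv_lt_top _ _
  have hg_lt_top : ∀ᵐ x ∂ν, μN.rnDeriv ν x < ∞ := Measure.rnDeriv_lt_top _ _
  have hbnd : ∀ᵐ x ∂ν, 0 ≤ f x ∧ 0 ≤ g x ∧ f x + g x = 1 := by
    filter_upwards [sum_rnDeriv_ae μK μN, hf_lt_top, hg_lt_top] with x hx hfx hgx
    have h1 : f x + g x = 1 := by
      simp only [hf_def, hg_def]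
      rw [← ENNReal.toReal_add hfx.ne hgx.ne, hν_def, hx]
      simp
    exact ⟨ENNReal.toReal_nonneg, ENNReal.toReal_nonneg, h1⟩
  set ε : ℝ := min p (1 - p) / 2 with hε_def
  have hε : 0 < ε := by
    have := lt_min hp0 (by linarith : (0:ℝ) < 1 - p)
    positivity
  have hball : ∀ t ∈ Metric.ball p ε, 0 < t ∧ t < 1 ∧ ε ≤ t ∧ ε ≤ 1 - t := by
    intro t ht
    rw [Metric.mem_ball, Real.dist_eq] at ht
    have h1 := abs_lt.mp ht
    have h2 : min p (1 - p) ≤ p := min_le_left _ _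
    have h3 : min p (1 - p) ≤ 1 - p := min_le_right _ _
    have h4 : 0 < min p (1 - p) := lt_min hp0 (by linarith)
    obtain ⟨hl, hr⟩ := h1
    have hεeq : ε = min p (1 - p) / 2 := hε_def
    exact ⟨by linarith, by linarith, by linarith, by linarith⟩
  -- differentiability a.e.
  have h_diff : ∀ᵐ x ∂ν, ∀ t ∈ Metric.ball p ε, HasDerivAt (fun s => F s x) (F' t x) t := by
    filter_upwards [hbnd] with x hx
    intro t ht
    obtain ⟨ht0, ht1, _, _⟩ := hball t ht
    exact F_hasDerivAt hx.1 hx.2.1 ht0 ht1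
  -- bound
  have h_bound : ∀ᵐ x ∂ν, ∀ t ∈ Metric.ball p ε,
      ‖F' t x‖ ≤ 2 * ((1 + |Real.log ε|) / Real.log 2) + 1 / Real.log 2 := by
    filter_upwards [hbnd] with x hx
    intro t ht
    obtain ⟨ht0, ht1, hεt, hεt'⟩ := hball t ht
    obtain ⟨h0f, h0g, hsum1⟩ := hx
    have hf1 : f x ≤ 1 := by linarith
    have hg1 : g x ≤ 1 := by linarith
    have hm_lb : ε ≤ t * f x + (1 - t) * g x := by
      have e1 : ε * f x ≤ t * f x := mul_le_mul_of_nonneg_right hεt h0f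
      have e2 : ε * g x ≤ (1 - t) * g x := mul_le_mul_of_nonneg_right hεt' h0g
      nlinarith
    have hm_ub : t * f x + (1 - t) * g x ≤ 1 := by nlinarith
    have hA := abs_mul_logb_le_s4 hε h0f hf1 hm_lb hm_ub
    have hB := abs_mul_logb_le_s4 hε h0g hg1 hm_lb hm_ub
    have hC : |(f x - g x) / Real.log 2| ≤ 1 / Real.log 2 := by
      rw [abs_div, abs_of_pos log_two_pos']
      gcongr
      rw [abs_le]
      constructor <;> linarith
    rw [Real.norm_eq_abs, hF'_def]
    calc |f x * Real.logb 2 (f x / (t * f x + (1 - t) * g x))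
          - g x * Real.logb 2 (g x / (t * f x + (1 - t) * g x))
          - (f x - g x) / Real.log 2|
        ≤ |f x * Real.logb 2 (f x / (t * f x + (1 - t) * g x))
            - g x * Real.logb 2 (g x / (t * f x + (1 - t) * g x))|
          + |(f x - g x) / Real.log 2| := abs_sub _ _
      _ ≤ |f x * Real.logb 2 (f x / (t * f x + (1 - t) * g x))|
          + |g x * Real.logb 2 (g x / (t * f x + (1 - t) * g x))|
          + |(f x - g x) / Real.log 2| := by
            have := abs_sub (f x * Real.logb 2 (f x / (t * f x + (1 - t) * g x)))
              (g x * Real.logb 2 (g x / (t * f x + (1 - t) * g x)))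
            linarith
      _ ≤ 2 * ((1 + |Real.log ε|) / Real.log 2) + 1 / Real.log 2 := by linarith
  -- measurability
  have hFt_meas : ∀ t : ℝ, Measurable (F t) := by
    intro t
    have hm : Measurable fun x => t * f x + (1 - t) * g x :=
      (hmeasf.const_mul t).add (hmeasg.const_mul (1 - t))
    exact ((hmeasf.mul (measurable_logb_comp (hmeasf.div hm))).const_mul t).add
      ((hmeasg.mul (measurable_logb_comp (hmeasg.div hm))).const_mul (1 - t))
  have hF'_meas : Measurable (F' p) := by
    have hm : Measurable fun x => p * f x + (1 - p) * g x :=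
      (hmeasf.const_mul p).add (hmeasg.const_mul (1 - p))
    exact ((hmeasf.mul (measurable_logb_comp (hmeasf.div hm))).sub
      (hmeasg.mul (measurable_logb_comp (hmeasg.div hm)))).sub
      ((hmeasf.sub hmeasg).div_const _)
  have hF_int : Integrable (F p) ν := by
    exact ((klK hp0 hp1).2.const_mul p).add ((klN hp0 hp1).2.const_mul (1 - p))
  -- dominated convergence derivative
  have hmain := hasDerivAt_integral_of_dominated_loc_of_deriv_le (μ := ν)
    (F := F) (F' := F') (x₀ := p)
    (bound := fun _ => 2 * ((1 + |Real.log ε|) / Real.log 2) + 1 / Real.log 2)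
    (Metric.ball_mem_nhds p hε) (Eventually.of_forall fun t => (hFt_meas t).aestronglyMeasurable)
    hF_int hF'_meas.aestronglyMeasurable h_bound (integrable_const _) h_diff
  obtain ⟨hF'_int, hder⟩ := hmain
  -- value of the derivative integral
  have hintf : Integrable f ν := Measure.integrable_toReal_rnDeriv
  have hintg : Integrable g ν := Measure.integrable_toReal_rnDeriv
  have hμKν : μK ≪ ν := ac_add_right μK μN
  have hμNν : μN ≪ ν := by rw [hν_def, add_comm]; exact ac_add_right μN μK
  have hval : ∫ x, F' p x ∂ν
      = (klDiv2 μK (mix p μK μN)).toReal - (klDiv2 μN (mix p μK μN)).toReal := by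
    have h1 := (klK hp0 hp1).1
    have h2 := (klN hp0 hp1).1
    rw [h1, h2, EReal.toReal_coe, EReal.toReal_coe]
    have e0 : ∫ x, F' p x ∂ν
        = ∫ x, (f x * Real.logb 2 (f x / (p * f x + (1 - p) * g x))
            - g x * Real.logb 2 (g x / (p * f x + (1 - p) * g x)))
          - (f x - g x) / Real.log 2 ∂ν := rfl
    have hf1 : ∫ x, f x ∂ν = 1 := by
      rw [hf_def, Measure.integral_toReal_rnDeriv hμKν]
      simp
    have hg1 : ∫ x, g x ∂ν = 1 := by
      rw [hg_def, Measure.integral_toReal_rnDeriv hμNν]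
      simp
    have i1 : Integrable (fun x =>
        f x * Real.logb 2 (f x / (p * f x + (1 - p) * g x))
        - g x * Real.logb 2 (g x / (p * f x + (1 - p) * g x))) ν :=
      (klK hp0 hp1).2.sub (klN hp0 hp1).2
    have i2 : Integrable (fun x => (f x - g x) / Real.log 2) ν :=
      (hintf.sub hintg).div_const _
    have hC : ∫ x, (f x - g x) / Real.log 2 ∂ν = 0 := by
      rw [integral_div, integral_sub hintf hintg, hf1, hg1]
      simp
    calc ∫ x, F' p x ∂ν
        = ∫ x, (f x * Real.logb 2 (f x / (p * f x + (1 - p) * g x))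
            - g x * Real.logb 2 (g x / (p * f x + (1 - p) * g x)))
          - (f x - g x) / Real.log 2 ∂ν := rfl
      _ = (∫ x, f x * Real.logb 2 (f x / (p * f x + (1 - p) * g x))
            - g x * Real.logb 2 (g x / (p * f x + (1 - p) * g x)) ∂ν)
          - ∫ x, (f x - g x) / Real.log 2 ∂ν := integral_sub i1 i2
      _ = ((∫ x, f x * Real.logb 2 (f x / (p * f x + (1 - p) * g x)) ∂ν)
          - ∫ x, g x * Real.logb 2 (g x / (p * f x + (1 - p) * g x)) ∂ν) - 0 := by
            rw [integral_sub (klK hp0 hp1).2 (klN hp0 hp1).2, hC]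
      _ = _ := by ring
  -- eventual equality with mutualInfoFun
  have hIoo : Set.Ioo (0:ℝ) 1 ∈ 𝓝 p := isOpen_Ioo.mem_nhds ⟨hp0, hp1⟩
  have heq : mutualInfoFun μK μN =ᶠ[𝓝 p] fun t => ∫ x, F t x ∂ν := by
    filter_upwards [hIoo] with t ht
    obtain ⟨ht0, ht1⟩ := ht
    have h1 := klK ht0 ht1
    have h2 := klN ht0 ht1
    rw [mutualInfoFun, h1.1, h2.1, EReal.toReal_coe, EReal.toReal_coe,
      ← integral_const_mul, ← integral_const_mul,
      ← integral_add (h1.2.const_mul t) (h2.2.const_mul (1 - t))]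
  have hfinal := hder.congr_of_eventuallyEq heq
  rw [hval] at hfinal
  exact hfinal
end
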